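/- arXiv:1503.00955 — 3 statements merged into one kernel-verified Lean document; each statement's English description precedes it below -/
import Mathlib

section
/- Beurling's functions H±(z) = (sin πz / π)^2 · { Σ_{m=-∞}^{∞} sgn(m)/(z-m)^2 + 2/z } ± (sin πz / (πz))^2 satisfy H^-(x) ≤ sgn(x) ≤ H^+(x) for all real x, where sgn(x) = 1 for x > 0, sgn(0) = 0, and sgn(x) = -1 for x < 0. -/
open Complex Real Filter MeasureTheory

noncomputable section

namespace BeurlingAux

lemma hasSum_telescope {c : ℝ} (hc : 0 < c) :
    HasSum (fun n : ℕ => 1 / (c + n) - 1 / (c + n + 1)) (1 / c) := by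
  have hnn : ∀ n : ℕ, 0 ≤ 1 / (c + n) - 1 / (c + n + 1) := by
    intro n
    have h1 : 0 < c + n := by positivity
    have := one_div_le_one_div_of_le h1 (by linarith : c + (n : ℝ) ≤ c + n + 1)
    linarith
  rw [hasSum_iff_tendsto_nat_of_nonneg hnn]
  have hps : ∀ n : ℕ, (∑ i ∈ Finset.range n, (1 / (c + i) - 1 / (c + i + 1)))
      = 1 / c - 1 / (c + n) := by
    intro n
    have h := Finset.sum_range_sub' (fun i : ℕ => 1 / (c + i)) n
    rw [show (1:ℝ)/c - 1/(c+n) = 1/(c+(0:ℕ)) - 1/(c+n) by norm_num, ← h]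
    apply Finset.sum_congr rfl
    intro i _
    push_cast
    ring_nf
  simp only [hps]
  have h2 : Tendsto (fun n : ℕ => 1 / (c + n)) atTop (nhds 0) := by
    have h3 : Tendsto (fun n : ℕ => c + (n:ℝ)) atTop atTop :=
      tendsto_atTop_add_const_left _ c tendsto_natCast_atTop_atTop
    exact h3.inv_tendsto_atTop.congr fun n => by simp
  have := (tendsto_const_nhds (x := 1 / c)).sub h2
  simpa using this

lemma summable_aux (c : ℝ) : Summable (fun n : ℕ => 1 / (c + n) ^ 2) := by
  obtain ⟨N, hN⟩ := exists_nat_ge (1 - c)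
  rw [← summable_nat_add_iff N]
  have target : Summable (fun n : ℕ => 1 / ((n : ℝ) + 1) ^ 2) := by
    have := (summable_nat_add_iff (f := fun n : ℕ => 1 / (n : ℝ) ^ 2) 1).2
      (summable_one_div_nat_pow.2 one_lt_two)
    exact this.congr (fun n => by push_cast; ring_nf)
  apply target.of_nonneg_of_le
  · intro n; positivity
  · intro n
    have h1 : (0 : ℝ) < (n : ℝ) + 1 := by positivity
    have h2 : (n : ℝ) + 1 ≤ c + (n + N : ℕ) := by push_cast; linarith
    apply one_div_le_one_div_of_le (by positivity)
    exact pow_le_pow_left₀ h1.le h2 2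

lemma summable_F (x : ℝ) : Summable (fun m : ℤ => 1 / (x - m) ^ 2) := by
  apply Summable.of_nat_of_neg_add_one
  · exact (summable_aux (-x)).congr (fun n => by push_cast; ring_nf)
  · exact (summable_aux (x + 1)).congr (fun n => by push_cast; ring_nf)

def fZ (x : ℝ) : ℝ := ∑' m : ℤ, 1 / (x - m) ^ 2
def gg (x : ℝ) : ℝ := (π / Real.sin (π * x)) ^ 2

lemma fZ_add_int (x : ℝ) (k : ℤ) : fZ (x + k) = fZ x := by
  unfold fZ
  rw [← (Equiv.addRight k).tsum_eq (fun m : ℤ => 1 / (x + k - m) ^ 2)]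
  apply tsum_congr
  intro m
  simp only [Equiv.coe_addRight]
  push_cast
  ring_nf

lemma fZ_neg (x : ℝ) : fZ (-x) = fZ x := by
  unfold fZ
  rw [← (Equiv.neg ℤ).tsum_eq (fun m : ℤ => 1 / (-x - m) ^ 2)]
  apply tsum_congr
  intro m
  show (1 : ℝ) / (-x - ↑(-m)) ^ 2 = 1 / (x - ↑m) ^ 2
  push_cast
  ring_nf

lemma sin_pi_ne {x : ℝ} (hx : ∀ m : ℤ, x ≠ m) : Real.sin (π * x) ≠ 0 := by
  rw [Real.sin_ne_zero_iff]
  intro n h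
  exact hx n (mul_left_cancel₀ Real.pi_ne_zero (by linear_combination - h))

lemma gg_add_int (x : ℝ) (k : ℤ) : gg (x + k) = gg x := by
  unfold gg
  rw [show π * (x + k) = π * x + k * π by ring, Real.sin_add_int_mul_pi]
  rcases Int.even_or_odd k with he | ho
  · rw [he.neg_one_zpow]; ring_nf
  · rw [Odd.neg_one_zpow ho]; ring_nf

lemma gg_neg (x : ℝ) : gg (-x) = gg x := by
  unfold gg
  rw [mul_neg, Real.sin_neg]
  ring_nf

lemma fZ_doubling (x : ℝ) : fZ (x / 2) + fZ ((x + 1) / 2) = 4 * fZ x := by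
  set F : ℤ → ℝ := fun m => 1 / (x - m) ^ 2 with hF
  have hs : Summable F := summable_F x
  have hse : Summable (fun q : ℤ => F (2 * q)) :=
    hs.comp_injective (fun a b h => by omega)
  have hso : Summable (fun q : ℤ => F (2 * q + 1)) :=
    hs.comp_injective (fun a b h => by omega)
  have h1 : fZ x = (∑' q : ℤ, F (2 * q)) + ∑' q : ℤ, F (2 * q + 1) := by
    have he := (Int.divModEquiv 2).symm.tsum_eq F
    have hsp : Summable (F ∘ (Int.divModEquiv 2).symm) :=
      (Equiv.summable_iff _).2 hs
    have he2 : ∑' (p : ℤ × Fin 2), (F ∘ (Int.divModEquiv 2).symm) p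
        = ∑' (q : ℤ), ∑' (r : Fin 2), (F ∘ (Int.divModEquiv 2).symm) (q, r) :=
      Summable.tsum_prod' hsp fun q => Summable.of_finite
    simp only [Function.comp] at he2
    rw [show fZ x = ∑' m : ℤ, F m from rfl, ← he, he2]
    have : ∀ q : ℤ, (∑' r : Fin 2, F ((Int.divModEquiv 2).symm (q, r)))
        = F (2 * q) + F (2 * q + 1) := by
      intro q
      rw [tsum_fintype, Fin.sum_univ_two]
      congr 1 <;> · congr 1; simp [Int.divModEquiv, mul_comm]
    rw [tsum_congr this, Summable.tsum_add hse hso]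
  have h2 : fZ (x / 2) = ∑' q : ℤ, 4 * F (2 * q) := by
    unfold fZ
    apply tsum_congr
    intro q
    simp only [hF]
    push_cast
    rcases eq_or_ne (x - 2 * (q : ℝ)) 0 with h | h
    · rw [show x / 2 - (q : ℝ) = (x - 2 * q) / 2 by ring, h]
      norm_num
    · rw [show x / 2 - (q : ℝ) = (x - 2 * q) / 2 by ring, div_pow]
      field_simp
      ring
  have h3 : fZ ((x + 1) / 2) = ∑' q : ℤ, 4 * F (2 * q + 1) := by
    have step : fZ ((x + 1) / 2) = ∑' q : ℤ, 4 * F (2 * q - 1) := by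
      unfold fZ
      apply tsum_congr
      intro q
      simp only [hF]
      push_cast
      rcases eq_or_ne (x - (2 * (q : ℝ) - 1)) 0 with h | h
      · rw [show (x + 1) / 2 - (q : ℝ) = (x - (2 * q - 1)) / 2 by ring, h]
        norm_num
      · rw [show (x + 1) / 2 - (q : ℝ) = (x - (2 * q - 1)) / 2 by ring, div_pow]
        field_simp
        ring
    rw [step, ← (Equiv.addRight (1 : ℤ)).tsum_eq (fun q : ℤ => 4 * F (2 * q - 1))]
    apply tsum_congr
    intro q
    simp only [Equiv.coe_addRight]
    congr 1
    ring_nf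
  rw [h1, h2, h3, tsum_mul_left, tsum_mul_left]
  ring

lemma cos_pi_half_ne {x : ℝ} (hx : ∀ m : ℤ, x ≠ m) : Real.cos (π * (x / 2)) ≠ 0 := by
  intro h
  rw [Real.cos_eq_zero_iff] at h
  obtain ⟨n, hn⟩ := h
  apply hx (2 * n + 1)
  have hπ : (π : ℝ) ≠ 0 := Real.pi_ne_zero
  have hx2 : x = 2 * (n : ℝ) + 1 := by
    have h2 : π * x = π * (2 * (n : ℝ) + 1) := by linear_combination 2 * hn
    exact mul_left_cancel₀ hπ h2
  push_cast
  linarith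

lemma sin_pi_half_ne {x : ℝ} (hx : ∀ m : ℤ, x ≠ m) : Real.sin (π * (x / 2)) ≠ 0 := by
  apply sin_pi_ne
  intro m h
  exact hx (2 * m) (by push_cast; linarith)

lemma gg_doubling {x : ℝ} (hx : ∀ m : ℤ, x ≠ m) :
    gg (x / 2) + gg ((x + 1) / 2) = 4 * gg x := by
  have hs := sin_pi_half_ne hx
  have hc := cos_pi_half_ne hx
  have hsx := sin_pi_ne hx
  have hπ : (π : ℝ) ≠ 0 := Real.pi_ne_zero
  unfold gg
  have e1 : Real.sin (π * ((x + 1) / 2)) = Real.cos (π * (x / 2)) := by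
    rw [show π * ((x + 1) / 2) = π * (x / 2) + π / 2 by ring, Real.sin_add_pi_div_two]
  have e2 : Real.sin (π * x) = 2 * Real.sin (π * (x / 2)) * Real.cos (π * (x / 2)) := by
    rw [show π * x = 2 * (π * (x / 2)) by ring, Real.sin_two_mul]
  rw [e1, e2]
  set s := Real.sin (π * (x / 2)) with hsd
  set c := Real.cos (π * (x / 2)) with hcd
  have hpyth : s ^ 2 + c ^ 2 = 1 := Real.sin_sq_add_cos_sq _
  field_simp
  linear_combination 4 * hpyth


lemma sin_cubic {x : ℝ} (hx : 0 ≤ x) : x - x ^ 3 / 6 ≤ Real.sin x := by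
  have key : MonotoneOn (fun t : ℝ => Real.sin t - (t - t ^ 3 / 6)) (Set.Ici 0) := by
    apply monotoneOn_of_deriv_nonneg (convex_Ici 0)
    · fun_prop
    · fun_prop
    · intro t _
      have hd : HasDerivAt (fun t : ℝ => Real.sin t - (t - t ^ 3 / 6))
          (Real.cos t - (1 - (3 : ℕ) * t ^ 2 / 6)) t := by
        have h2 := (hasDerivAt_pow 3 t).div_const 6
        have h3 := (hasDerivAt_id t).sub h2
        exact ((Real.hasDerivAt_sin t).sub h3).congr_deriv (by norm_num)
      rw [hd.deriv]
      have := Real.one_sub_sq_div_two_le_cos (x := t)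
      push_cast
      nlinarith [this]
  have h0 := key Set.self_mem_Ici (Set.mem_Ici.2 hx) hx
  simp only [Real.sin_zero] at h0
  norm_num at h0
  linarith [h0]

lemma sum_shift_one {x : ℝ} : Summable (fun n : ℕ => 1 / (x - (n : ℝ)) ^ 2) :=
  (summable_aux (-x)).congr (fun n => by push_cast; ring_nf)

lemma sum_neg_side {x : ℝ} : Summable (fun n : ℕ => 1 / (x + (n : ℝ) + 1) ^ 2) :=
  (summable_aux (x + 1)).congr (fun n => by push_cast; ring_nf)

lemma B_le_two {x : ℝ} (h0 : 0 < x) : (∑' n : ℕ, 1 / (x + n + 1) ^ 2) ≤ 2 := by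
  have ht := hasSum_telescope (c := (1 : ℝ) / 2) (by norm_num)
  have h2 : (∑' n : ℕ, (1 / ((1 : ℝ) / 2 + n) - 1 / (1 / 2 + n + 1))) = 2 := by
    rw [ht.tsum_eq]; norm_num
  refine le_trans (Summable.tsum_le_tsum ?_ sum_neg_side ht.summable) (le_of_eq h2)
  intro n
  have d1 : ((1 : ℝ) / 2 + n) ≠ 0 := by positivity
  have d2 : ((1 : ℝ) / 2 + n + 1) ≠ 0 := by positivity
  have e : 1 / ((1 : ℝ) / 2 + n) - 1 / (1 / 2 + n + 1) = 1 / ((1 / 2 + n) * (3 / 2 + n)) := by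
    rw [div_sub_div _ _ d1 d2,
      show (1 * ((1 : ℝ) / 2 + n + 1) - (1 / 2 + n) * 1) = 1 by ring,
      show ((1 : ℝ) / 2 + n) * (1 / 2 + n + 1) = (1 / 2 + n) * (3 / 2 + n) by ring]
  rw [e]
  apply one_div_le_one_div_of_le (by positivity)
  nlinarith [sq_nonneg ((n : ℝ))]

lemma fZ_split (x : ℝ) : fZ x = (∑' n : ℕ, 1 / (x - n) ^ 2) + ∑' n : ℕ, 1 / (x + n + 1) ^ 2 := by
  unfold fZ
  rw [tsum_of_nat_of_neg_add_one
    (sum_shift_one.congr (fun n => by push_cast; ring_nf))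
    (sum_neg_side.congr (fun n => by push_cast; ring_nf))]
  congr 1 <;> · exact tsum_congr fun n => by push_cast; try ring

set_option maxHeartbeats 1000000 in
lemma bound_half {x : ℝ} (h0 : 0 < x) (h2 : x ≤ 1 / 2) : |fZ x - gg x| ≤ 16 := by
  have hπ0 : (0 : ℝ) < π := Real.pi_pos
  -- lower bound for fZ
  have flow : 1 / x ^ 2 ≤ fZ x := by
    unfold fZ
    have := Summable.le_tsum (summable_F x) 0 (fun j _ => by positivity)
    simpa using this
  -- upper bound for fZ
  have fup : fZ x ≤ 1 / x ^ 2 + 7 := by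
    rw [fZ_split x]
    have hQ : (∑' n : ℕ, 1 / (x + n + 1) ^ 2) ≤ 2 := B_le_two h0
    have sP : Summable (fun n : ℕ => 1 / (x - (n : ℝ)) ^ 2) := sum_shift_one
    have sP2 : Summable (fun n : ℕ => 1 / (x - ((n + 1 + 1 : ℕ) : ℝ)) ^ 2) := by
      exact (summable_aux (2 - x)).congr (fun n => by push_cast; ring_nf)
    have eP : (∑' n : ℕ, 1 / (x - n) ^ 2)
        = 1 / x ^ 2 + (1 / (x - 1) ^ 2 + ∑' n : ℕ, 1 / (x - ((n + 1 + 1 : ℕ) : ℝ)) ^ 2) := by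
      rw [Summable.tsum_eq_zero_add sP, Summable.tsum_eq_zero_add ((summable_nat_add_iff 1).2 sP)]
      norm_num
    rw [eP]
    have hR : (∑' n : ℕ, 1 / (x - ((n + 1 + 1 : ℕ) : ℝ)) ^ 2) ≤ 1 := by
      have ht := hasSum_telescope (c := (1 : ℝ)) (by norm_num)
      have h1 : (∑' n : ℕ, (1 / ((1 : ℝ) + n) - 1 / (1 + n + 1))) = 1 := by
        rw [ht.tsum_eq]; norm_num
      refine le_trans (Summable.tsum_le_tsum ?_ sP2 ht.summable) (le_of_eq h1)
      intro n
      have d1 : ((1 : ℝ) + n) ≠ 0 := by positivity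
      have d2 : ((1 : ℝ) + n + 1) ≠ 0 := by positivity
      have e : 1 / ((1 : ℝ) + n) - 1 / (1 + n + 1) = 1 / ((1 + n) * (2 + n)) := by
        rw [div_sub_div _ _ d1 d2,
          show (1 * ((1 : ℝ) + n + 1) - (1 + n) * 1) = 1 by ring,
          show ((1 : ℝ) + n) * (1 + n + 1) = (1 + n) * (2 + n) by ring]
      rw [e]
      apply one_div_le_one_div_of_le (by positivity)
      have hc : ((n : ℕ) + 1 + 1 : ℕ) = ((n : ℝ) + 2) := by push_cast; ring
      rw [hc]
      nlinarith [sq_nonneg ((n : ℝ))]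
    have hmid : 1 / (x - 1) ^ 2 ≤ 4 := by
      have : (1 : ℝ) / 4 ≤ (x - 1) ^ 2 := by nlinarith
      calc 1 / (x - 1) ^ 2 ≤ 1 / (1 / 4 : ℝ) := one_div_le_one_div_of_le (by norm_num) this
        _ = 4 := by norm_num
    linarith
  -- trig facts
  have hπx0 : 0 < π * x := by positivity
  have hπxπ : π * x < π := by nlinarith
  set s := Real.sin (π * x) with hsd
  have hs0 : 0 < s := Real.sin_pos_of_pos_of_lt_pi hπx0 hπxπ
  have hsle : s ≤ π * x := Real.sin_le hπx0.le
  have hs2x : 2 * x ≤ s := by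
    have := Real.mul_le_sin (x := π * x) hπx0.le (by nlinarith)
    calc 2 * x = 2 / π * (π * x) := by field_simp
      _ ≤ s := this
  have hcub : π * x - (π * x) ^ 3 / 6 ≤ s := sin_cubic hπx0.le
  have hgg : gg x = π ^ 2 / s ^ 2 := by rw [gg, div_pow]
  -- lower bound for gg
  have glow : 1 / x ^ 2 ≤ gg x := by
    rw [hgg, div_le_div_iff₀ (by positivity) (by positivity)]
    nlinarith
  -- upper bound for gg
  have hπ4 : π ^ 4 ≤ 99 := by
    have hsq : π ^ 2 ≤ 9.9225 := by nlinarith [Real.pi_lt_d2, Real.pi_pos]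
    nlinarith [hsq, sq_nonneg (π ^ 2)]
  have gup : gg x ≤ 1 / x ^ 2 + 9 := by
    rw [hgg, show (1 : ℝ) / x ^ 2 + 9 = (1 + 9 * x ^ 2) / x ^ 2 by field_simp,
      div_le_div_iff₀ (by positivity) (by positivity)]
    have key : π ^ 2 * x ^ 2 - s ^ 2 ≤ π ^ 4 * x ^ 4 / 3 := by
      nlinarith [mul_le_mul (by nlinarith : π * x - s ≤ π ^ 3 * x ^ 3 / 6)
        (by nlinarith : π * x + s ≤ 2 * (π * x)) (by nlinarith) (by positivity)]
    have hs4 : 4 * x ^ 2 ≤ s ^ 2 := by nlinarith [hs2x, h0]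
    have hx4 : (0 : ℝ) ≤ x ^ 4 := by positivity
    have t1 := mul_le_mul_of_nonneg_left hs4 (show (0 : ℝ) ≤ 9 * x ^ 2 by positivity)
    have t2 := mul_le_mul_of_nonneg_right hπ4 hx4
    have expand : (1 + 9 * x ^ 2) * s ^ 2 = s ^ 2 + 9 * x ^ 2 * s ^ 2 := by ring
    have t1' : 36 * x ^ 4 ≤ 9 * x ^ 2 * s ^ 2 := by nlinarith [t1]
    linarith [key, t1', t2, hx4, expand]
  rw [abs_le]
  constructor <;> nlinarith

lemma bound_unit {x : ℝ} (h0 : 0 < x) (h1 : x < 1) : |fZ x - gg x| ≤ 16 := by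
  rcases le_or_gt x (1 / 2) with h | h
  · exact bound_half h0 h
  · have e1 : fZ (1 - x) = fZ x := by
      rw [show (1 : ℝ) - x = -x + ((1 : ℤ) : ℝ) by push_cast; ring, fZ_add_int, fZ_neg]
    have e2 : gg (1 - x) = gg x := by
      rw [show (1 : ℝ) - x = -x + ((1 : ℤ) : ℝ) by push_cast; ring, gg_add_int, gg_neg]
    have := bound_half (x := 1 - x) (by linarith) (by linarith)
    rwa [e1, e2] at this

lemma bound_all {x : ℝ} (hx : ∀ m : ℤ, x ≠ m) : |fZ x - gg x| ≤ 16 := by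
  set y := Int.fract x with hy
  have hy0 : 0 ≤ y := Int.fract_nonneg x
  have hy1 : y < 1 := Int.fract_lt_one x
  have hxy : x = y + (⌊x⌋ : ℝ) := by rw [hy, Int.fract]; ring
  have hyne : 0 < y := by
    rcases hy0.lt_or_eq with h | h
    · exact h
    · exact absurd (by rw [hxy, ← h]; simp : x = (⌊x⌋ : ℝ)) (hx ⌊x⌋)
  have e1 : fZ x = fZ y := by rw [hxy, fZ_add_int]
  have e2 : gg x = gg y := by rw [hxy, gg_add_int]
  rw [e1, e2]
  exact bound_unit hyne hy1

lemma fZ_eq_gg {x : ℝ} (hx : ∀ m : ℤ, x ≠ m) : fZ x = gg x := by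
  set A : Set ℝ := {y | ∃ t : ℝ, (∀ m : ℤ, t ≠ m) ∧ y = |fZ t - gg t|} with hA
  have hbdd : BddAbove A := ⟨16, by rintro y ⟨t, ht, rfl⟩; exact bound_all ht⟩
  have hne : A.Nonempty := ⟨|fZ x - gg x|, x, hx, rfl⟩
  have hmem : ∀ t : ℝ, (∀ m : ℤ, t ≠ m) → |fZ t - gg t| ≤ sSup A := by
    intro t ht
    exact le_csSup hbdd ⟨t, ht, rfl⟩
  have hhalf : ∀ t : ℝ, (∀ m : ℤ, t ≠ m) → |fZ t - gg t| ≤ sSup A / 2 := by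
    intro t ht
    have h1 : ∀ m : ℤ, t / 2 ≠ m := by
      intro m h; exact ht (2 * m) (by push_cast; linarith)
    have h2 : ∀ m : ℤ, (t + 1) / 2 ≠ m := by
      intro m h; exact ht (2 * m - 1) (by push_cast; linarith)
    have e : fZ t - gg t
        = ((fZ (t / 2) - gg (t / 2)) + (fZ ((t + 1) / 2) - gg ((t + 1) / 2))) / 4 := by
      have ha := fZ_doubling t
      have hb := gg_doubling ht
      linarith
    have b1 := hmem _ h1
    have b2 := hmem _ h2
    have habs := abs_add_le (fZ (t / 2) - gg (t / 2)) (fZ ((t + 1) / 2) - gg ((t + 1) / 2))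
    rw [e, abs_div, abs_of_pos (by norm_num : (0 : ℝ) < 4)]
    rw [div_le_div_iff₀ (by norm_num) (by norm_num)]
    nlinarith [abs_nonneg (fZ (t / 2) - gg (t / 2))]
  have hM2 : sSup A ≤ sSup A / 2 :=
    csSup_le hne (by rintro y ⟨t, ht, rfl⟩; exact hhalf t ht)
  have hfin : |fZ x - gg x| ≤ 0 := le_trans (hmem x hx) (by linarith)
  exact sub_eq_zero.1 (abs_eq_zero.1 (le_antisymm hfin (abs_nonneg _)))


def TT (x : ℝ) : ℝ := ∑' m : ℤ, (Int.sign m : ℝ) / (x - m) ^ 2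
def SS (x : ℝ) : ℝ := (Real.sin (π * x) / π) ^ 2
def KK (x : ℝ) : ℝ := (Real.sin (π * x) / (π * x)) ^ 2
def BB (x : ℝ) : ℝ := ∑' n : ℕ, 1 / (x + n + 1) ^ 2
def EE (x : ℝ) : ℝ := SS x * (TT x + 2 / x)

lemma sign_abs_le (m : ℤ) : |(Int.sign m : ℝ)| ≤ 1 := by
  rcases m with (_ | n) | n <;> simp [Int.sign]

lemma summable_T (x : ℝ) : Summable (fun m : ℤ => (Int.sign m : ℝ) / (x - m) ^ 2) := by
  apply Summable.of_norm_bounded (summable_F x)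
  intro m
  rw [Real.norm_eq_abs, abs_div, _root_.abs_of_nonneg (sq_nonneg (x - (m : ℝ)))]
  rcases eq_or_ne ((x - (m : ℝ)) ^ 2) 0 with h | h
  · rw [h]; simp
  · exact (div_le_div_iff_of_pos_right ((sq_nonneg _).lt_of_ne' h)).2 (sign_abs_le m)

set_option maxHeartbeats 1000000 in
lemma T_split (x : ℝ) : TT x = fZ x - (1 / x ^ 2 + 2 * BB x) := by
  have hsub : fZ x - TT x = ∑' m : ℤ, (1 - (Int.sign m : ℝ)) / (x - m) ^ 2 := by
    rw [fZ, TT, ← Summable.tsum_sub (summable_F x) (summable_T x)]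
    exact tsum_congr fun m => (sub_div _ _ _).symm
  have hnat : Summable (fun n : ℕ => (1 - (Int.sign (n : ℤ) : ℝ)) / (x - ((n : ℤ) : ℝ)) ^ 2) := by
    apply summable_of_ne_finset_zero (s := {0})
    intro n hn
    simp only [Finset.mem_singleton] at hn
    rcases n with _ | k
    · omega
    · simp
  have hneg : Summable (fun n : ℕ =>
      (1 - (Int.sign (-((n : ℤ) + 1)) : ℝ)) / (x - ((-((n : ℤ) + 1) : ℤ) : ℝ)) ^ 2) := by
    apply ((sum_neg_side (x := x)).mul_left 2).congr
    intro n
    rw [Int.sign_neg]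
    simp only [Int.sign_natCast_add_one]
    push_cast
    ring
  have hsplit := tsum_of_nat_of_neg_add_one
    (f := fun m : ℤ => (1 - (Int.sign m : ℝ)) / (x - m) ^ 2) hnat hneg
  rw [hsplit] at hsub
  have e1 : (∑' n : ℕ, (1 - (Int.sign (n : ℤ) : ℝ)) / (x - ((n : ℤ) : ℝ)) ^ 2) = 1 / x ^ 2 := by
    rw [tsum_eq_single 0]
    · simp
    · intro n hn
      rcases n with _ | k
      · omega
      · simp
  have e2 : (∑' n : ℕ,
      (1 - (Int.sign (-((n : ℤ) + 1)) : ℝ)) / (x - ((-((n : ℤ) + 1) : ℤ) : ℝ)) ^ 2) = 2 * BB x := by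
    rw [BB, ← tsum_mul_left]
    apply tsum_congr
    intro n
    rw [Int.sign_neg]
    simp only [Int.sign_natCast_add_one]
    push_cast
    ring
  rw [e1, e2] at hsub
  linarith

lemma B_le_inv {x : ℝ} (h0 : 0 < x) : BB x ≤ 1 / x := by
  have ht := hasSum_telescope h0
  refine le_trans (Summable.tsum_le_tsum ?_ sum_neg_side ht.summable) (le_of_eq ht.tsum_eq)
  intro n
  have d1 : x + (n : ℝ) ≠ 0 := by positivity
  have d2 : x + (n : ℝ) + 1 ≠ 0 := by positivity
  have e : 1 / (x + (n : ℝ)) - 1 / (x + n + 1) = 1 / ((x + n) * (x + n + 1)) := by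
    rw [div_sub_div _ _ d1 d2,
      show (1 * (x + (n : ℝ) + 1) - (x + n) * 1) = 1 by ring]
  rw [e]
  apply one_div_le_one_div_of_le (by positivity)
  nlinarith [sq_nonneg (x + (n : ℝ))]

lemma inv_le_A {x : ℝ} (h0 : 0 < x) : 1 / x ≤ 1 / x ^ 2 + BB x := by
  have hA : (∑' n : ℕ, 1 / (x + n) ^ 2) = 1 / x ^ 2 + BB x := by
    rw [Summable.tsum_eq_zero_add (summable_aux x)]
    congr 1
    · norm_num
    · rw [BB]; exact tsum_congr fun n => by push_cast; ring_nf
  have ht := hasSum_telescope h0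
  rw [← hA, ← ht.tsum_eq]
  apply Summable.tsum_le_tsum _ ht.summable (summable_aux x)
  intro n
  have d1 : x + (n : ℝ) ≠ 0 := by positivity
  have d2 : x + (n : ℝ) + 1 ≠ 0 := by positivity
  have e : 1 / (x + (n : ℝ)) - 1 / (x + n + 1) = 1 / ((x + n) * (x + n + 1)) := by
    rw [div_sub_div _ _ d1 d2,
      show (1 * (x + (n : ℝ) + 1) - (x + n) * 1) = 1 by ring]
  rw [e]
  apply one_div_le_one_div_of_le (by positivity)
  nlinarith [sq_nonneg (x + (n : ℝ))]

lemma one_eq {x : ℝ} (hx : ∀ m : ℤ, x ≠ m) : SS x * fZ x = 1 := by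
  rw [fZ_eq_gg hx]
  have hs := sin_pi_ne hx
  have hπ : (π : ℝ) ≠ 0 := Real.pi_ne_zero
  simp only [SS, gg]
  field_simp

lemma KK_eq (x : ℝ) : KK x = SS x * (1 / x ^ 2) := by
  simp only [KK, SS, div_pow, mul_pow]
  ring

lemma main_pos {x : ℝ} (h0 : 0 < x) (hx : ∀ m : ℤ, x ≠ m) :
    EE x - KK x ≤ 1 ∧ 1 ≤ EE x + KK x := by
  have h1 := one_eq hx
  have hT := T_split x
  have hK := KK_eq x
  have hSnn : 0 ≤ SS x := sq_nonneg _
  have hB := B_le_inv h0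
  have hAA := inv_le_A h0
  constructor
  · have e : EE x - KK x = SS x * fZ x - SS x * (2 * (1 / x ^ 2 + BB x - 1 / x)) := by
      rw [EE, hT, hK]; ring
    have hp := mul_nonneg hSnn (by linarith : (0 : ℝ) ≤ 2 * (1 / x ^ 2 + BB x - 1 / x))
    linarith
  · have e : EE x + KK x = SS x * fZ x + SS x * (2 * (1 / x - BB x)) := by
      rw [EE, hT, hK]; ring
    have hp := mul_nonneg hSnn (by linarith : (0 : ℝ) ≤ 2 * (1 / x - BB x))
    linarith

lemma TT_neg (x : ℝ) : TT (-x) = - TT x := by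
  rw [TT, TT, ← tsum_neg, ← (Equiv.neg ℤ).tsum_eq
    (fun m : ℤ => (Int.sign m : ℝ) / (-x - m) ^ 2)]
  apply tsum_congr
  intro m
  show (Int.sign (-m) : ℝ) / (-x - ((-m : ℤ) : ℝ)) ^ 2 = -((Int.sign m : ℝ) / (x - m) ^ 2)
  have hsq : (-x - ((-m : ℤ) : ℝ)) ^ 2 = (x - m) ^ 2 := by push_cast; ring
  rw [Int.sign_neg, Int.cast_neg, hsq, neg_div]

lemma SS_neg (x : ℝ) : SS (-x) = SS x := by
  simp only [SS, mul_neg, Real.sin_neg]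
  ring

lemma KK_neg (x : ℝ) : KK (-x) = KK x := by
  simp only [KK, mul_neg, Real.sin_neg]
  ring

lemma EE_neg (x : ℝ) : EE (-x) = - EE x := by
  rw [EE, EE, SS_neg, TT_neg]
  ring


lemma seq_right (n : ℤ) : ∃ u : ℕ → ℝ, Tendsto u atTop (nhds (n : ℝ)) ∧
    ∀ k, (n : ℝ) < u k ∧ u k < n + 1 ∧ ∀ m : ℤ, u k ≠ m := by
  refine ⟨fun k => (n : ℝ) + 1 / (k + 2), ?_, ?_⟩
  · have h1 : Tendsto (fun k : ℕ => (2 : ℝ) + k) atTop atTop :=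
      tendsto_atTop_add_const_left _ 2 tendsto_natCast_atTop_atTop
    have h2 : Tendsto (fun k : ℕ => ((2 : ℝ) + k)⁻¹) atTop (nhds 0) := h1.inv_tendsto_atTop
    have h3 := (tendsto_const_nhds (x := (n : ℝ))).add h2
    simp only [add_zero] at h3
    exact h3.congr (fun k => by rw [one_div]; ring_nf)
  · intro k
    have hp : (0 : ℝ) < 1 / (k + 2) := by positivity
    have hl : (1 : ℝ) / (k + 2) < 1 := by
      rw [div_lt_one (by positivity)]
      have : (0 : ℝ) ≤ (k : ℝ) := Nat.cast_nonneg k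
      linarith
    refine ⟨by linarith, by linarith, ?_⟩
    intro m h
    have hc : ((m - n : ℤ) : ℝ) = 1 / (k + 2) := by push_cast; linarith
    have h1 : (0 : ℤ) < m - n := by exact_mod_cast hc ▸ hp
    have h2 : (m - n : ℤ) < 1 := by
      have : ((m - n : ℤ) : ℝ) < 1 := by rw [hc]; exact hl
      exact_mod_cast this
    omega

lemma seq_left (n : ℤ) : ∃ u : ℕ → ℝ, Tendsto u atTop (nhds (n : ℝ)) ∧
    ∀ k, (n : ℝ) - 1 < u k ∧ u k < n ∧ ∀ m : ℤ, u k ≠ m := by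
  obtain ⟨u, hu, hk⟩ := seq_right (-n)
  refine ⟨fun k => -(u k), ?_, ?_⟩
  · have := hu.neg
    convert this using 2
    push_cast
    ring
  · intro k
    obtain ⟨h1, h2, h3⟩ := hk k
    push_cast at h1 h2 ⊢
    refine ⟨by linarith, by linarith, ?_⟩
    intro m h
    exact h3 (-m) (by push_cast; linarith)

lemma limit_ge {G : ℂ → ℂ} (hG : Continuous G) {u : ℕ → ℝ} {c b : ℝ}
    (hu : Tendsto u atTop (nhds c)) (hb : ∀ k, b ≤ (G (u k)).re) : b ≤ (G (c : ℂ)).re :=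
  ge_of_tendsto'
    (((Complex.continuous_re.comp (hG.comp Complex.continuous_ofReal)).tendsto c).comp hu) hb

lemma limit_le {G : ℂ → ℂ} (hG : Continuous G) {u : ℕ → ℝ} {c b : ℝ}
    (hu : Tendsto u atTop (nhds c)) (hb : ∀ k, (G (u k)).re ≤ b) : (G (c : ℂ)).re ≤ b :=
  le_of_tendsto'
    (((Complex.continuous_re.comp (hG.comp Complex.continuous_ofReal)).tendsto c).comp hu) hb

end BeurlingAux

open BeurlingAux in
/-- Beurling's functions
`H±(z) = (sin πz / π)^2 { Σ_{m∈ℤ} sgn(m)/(z-m)^2 + 2/z } ± (sin πz/(πz))^2`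
(real entire functions, characterized by the displayed formula away from the integers)
satisfy `H⁻(x) ≤ sgn(x) ≤ H⁺(x)` for all real `x`. -/
theorem beurling_majorant_minorant_sign
    (Hp Hm : ℂ → ℂ)
    (hHp_entire : Differentiable ℂ Hp) (hHm_entire : Differentiable ℂ Hm)
    (hHp : ∀ z : ℂ, (∀ m : ℤ, z ≠ (m : ℂ)) →
      Hp z = (Complex.sin (π * z) / π) ^ 2 *
          ((∑' m : ℤ, (Int.sign m : ℂ) / (z - (m : ℂ)) ^ 2) + 2 / z)
        + (Complex.sin (π * z) / (π * z)) ^ 2)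
    (hHm : ∀ z : ℂ, (∀ m : ℤ, z ≠ (m : ℂ)) →
      Hm z = (Complex.sin (π * z) / π) ^ 2 *
          ((∑' m : ℤ, (Int.sign m : ℂ) / (z - (m : ℂ)) ^ 2) + 2 / z)
        - (Complex.sin (π * z) / (π * z)) ^ 2) :
    ∀ x : ℝ, (Hm (x : ℂ)).re ≤ Real.sign x ∧ Real.sign x ≤ (Hp (x : ℂ)).re := by
  -- real formulas at noninteger points
  have hre : ∀ x : ℝ, (∀ m : ℤ, x ≠ (m : ℝ)) →
      (Hp (x : ℂ)).re = EE x + KK x ∧ (Hm (x : ℂ)).re = EE x - KK x := by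
    intro x hx
    have hni' : ∀ m : ℤ, (x : ℂ) ≠ (m : ℂ) := fun m h => hx m (by exact_mod_cast h)
    have hCT : (∑' m : ℤ, (Int.sign m : ℂ) / ((x : ℂ) - (m : ℂ)) ^ 2) = ((TT x : ℝ) : ℂ) := by
      rw [TT, Complex.ofReal_tsum]
      exact tsum_congr fun m => by push_cast; norm_num
    constructor
    · have h1 : Hp (x : ℂ) = ((EE x + KK x : ℝ) : ℂ) := by
        rw [hHp _ hni', hCT]
        simp only [EE, KK, SS]
        push_cast
        ring
      rw [h1, Complex.ofReal_re]
    · have h1 : Hm (x : ℂ) = ((EE x - KK x : ℝ) : ℂ) := by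
        rw [hHm _ hni', hCT]
        simp only [EE, KK, SS]
        push_cast
        ring
      rw [h1, Complex.ofReal_re]
  -- noninteger case
  have raw : ∀ x : ℝ, (∀ m : ℤ, x ≠ (m : ℝ)) →
      (Hm (x : ℂ)).re ≤ Real.sign x ∧ Real.sign x ≤ (Hp (x : ℂ)).re := by
    intro x hx
    obtain ⟨hp, hm⟩ := hre x hx
    rcases lt_trichotomy x 0 with hneg | hzero | hpos
    · have hy : ∀ m : ℤ, -x ≠ (m : ℝ) := by
        intro m h
        exact hx (-m) (by push_cast; linarith)
      obtain ⟨c1, c2⟩ := main_pos (by linarith : (0 : ℝ) < -x) hy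
      have e1 : EE x = - EE (-x) := by rw [EE_neg]; ring
      have e2 : KK x = KK (-x) := (KK_neg x).symm
      rw [Real.sign_of_neg hneg, hp, hm, e1, e2]
      constructor <;> linarith
    · exact absurd hzero (by simpa using hx 0)
    · obtain ⟨c1, c2⟩ := main_pos hpos hx
      rw [Real.sign_of_pos hpos, hp, hm]
      constructor <;> linarith
  intro x
  by_cases hex : ∃ n : ℤ, x = (n : ℝ)
  · obtain ⟨n, rfl⟩ := hex
    obtain ⟨u, hu, hku⟩ := seq_right n
    obtain ⟨v, hv, hkv⟩ := seq_left n
    -- facts from the right (u k > n ≥ ? )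
    have hR : ∀ k, 0 ≤ n → (Hm (u k : ℂ)).re ≤ 1 ∧ 1 ≤ (Hp (u k : ℂ)).re := by
      intro k hn
      obtain ⟨h1, _, h3⟩ := hku k
      have hpos : 0 < u k := by
        have : (0 : ℝ) ≤ (n : ℝ) := by exact_mod_cast hn
        linarith
      have := raw (u k) h3
      rwa [Real.sign_of_pos hpos] at this
    have hL : ∀ k, n ≤ 0 → (Hm (v k : ℂ)).re ≤ -1 ∧ -1 ≤ (Hp (v k : ℂ)).re := by
      intro k hn
      obtain ⟨_, h2, h3⟩ := hkv k
      have hneg : v k < 0 := by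
        have : (n : ℝ) ≤ 0 := by exact_mod_cast hn
        linarith
      have := raw (v k) h3
      rwa [Real.sign_of_neg hneg] at this
    rcases lt_trichotomy n 0 with hn | hn | hn
    · rw [show Real.sign (n : ℝ) = -1 from Real.sign_of_neg (by exact_mod_cast hn)]
      constructor
      · exact limit_le hHm_entire.continuous hv (fun k => (hL k hn.le).1)
      · exact limit_ge hHp_entire.continuous hv (fun k => (hL k hn.le).2)
    · subst hn
      rw [show Real.sign ((0 : ℤ) : ℝ) = 0 by norm_num [Real.sign_zero]]
      constructor
      · have := limit_le hHm_entire.continuous hv (fun k => (hL k le_rfl).1)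
        linarith
      · have := limit_ge hHp_entire.continuous hu (fun k => (hR k le_rfl).2)
        linarith
    · rw [show Real.sign (n : ℝ) = 1 from Real.sign_of_pos (by exact_mod_cast hn)]
      constructor
      · exact limit_le hHm_entire.continuous hu (fun k => (hR k hn.le).1)
      · have := limit_ge hHp_entire.continuous hu (fun k => (hR k hn.le).2)
        linarith
  · push_neg at hex
    exact raw x hex
end
end

section
/- Let t and Δ be positive real numbers and let R±(z) = (1/2)·{H±(Δ(t+z)) + H±(Δ(t-z))}. Then there is an absolute constant C such that |R±(z)| ≤ C·exp(2πΔ·|Im z|) for all complex z. -/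
open Complex Real Filter MeasureTheory



lemma sinh_le_mul_exp {t : ℝ} (ht : 0 ≤ t) : Real.sinh t ≤ t * Real.exp t := by
  have h1 : 1 - 2*t ≤ Real.exp (-(2*t)) := by
    have := Real.add_one_le_exp (-(2*t)); linarith
  have h3 : Real.exp (-(2*t)) = Real.exp (-t) * Real.exp (-t) := by
    rw [← Real.exp_add]; ring_nf
  have h2 : Real.exp (-t) * Real.exp t = 1 := by
    rw [← Real.exp_add]; simp
  have h4 : 0 < Real.exp t := Real.exp_pos t
  have h5 : 0 < Real.exp (-t) := Real.exp_pos _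
  rw [Real.sinh_eq]
  nlinarith [mul_le_mul_of_nonneg_left (h3 ▸ h1) h4.le]

lemma norm_sin_split (z : ℂ) :
    ‖Complex.sin z‖ ≤ |Real.sin z.re| * Real.cosh |z.im| + |Real.cos z.re| * Real.sinh |z.im| := by
  rw [Complex.sin_eq]
  refine (norm_add_le _ _).trans ?_
  rw [norm_mul, norm_mul, norm_mul, Complex.norm_I, mul_one]
  rw [← Complex.ofReal_sin, ← Complex.ofReal_cos, ← Complex.ofReal_sinh, ← Complex.ofReal_cosh]
  simp only [Complex.norm_real, Real.norm_eq_abs]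
  rw [_root_.abs_of_nonneg (Real.cosh_pos _).le, Real.abs_sinh, Real.cosh_abs]

lemma norm_sin_le_exp (z : ℂ) : ‖Complex.sin z‖ ≤ Real.exp |z.im| := by
  refine (norm_sin_split z).trans ?_
  have hs : |Real.sin z.re| ≤ 1 := Real.abs_sin_le_one _
  have hc : |Real.cos z.re| ≤ 1 := Real.abs_cos_le_one _
  have h4 : Real.cosh |z.im| + Real.sinh |z.im| = Real.exp |z.im| := Real.cosh_add_sinh _
  nlinarith [Real.cosh_pos |z.im|, Real.sinh_nonneg_iff.mpr (abs_nonneg z.im)]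

lemma norm_sin_le_mul_exp (z : ℂ) : ‖Complex.sin z‖ ≤ 2 * ‖z‖ * Real.exp |z.im| := by
  refine (norm_sin_split z).trans ?_
  have hs : |Real.sin z.re| ≤ |z.re| := Real.abs_sin_le_abs
  have hc : |Real.cos z.re| ≤ 1 := Real.abs_cos_le_one _
  have h2 : Real.cosh |z.im| ≤ Real.exp |z.im| := by
    rw [Real.cosh_eq]
    have a1 : Real.exp (-|z.im|) ≤ 1 := Real.exp_le_one_iff.mpr (by simp [abs_nonneg])
    have a2 : 1 ≤ Real.exp |z.im| := Real.one_le_exp (abs_nonneg _)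
    linarith
  have h3 : Real.sinh |z.im| ≤ |z.im| * Real.exp |z.im| := sinh_le_mul_exp (abs_nonneg _)
  have h4 : |z.re| ≤ ‖z‖ := Complex.abs_re_le_norm z
  have h5 : |z.im| ≤ ‖z‖ := Complex.abs_im_le_norm z
  have h6 : 0 < Real.exp |z.im| := Real.exp_pos _
  nlinarith [Real.cosh_pos |z.im|, Real.sinh_nonneg_iff.mpr (abs_nonneg z.im), abs_nonneg z.re,
    abs_nonneg z.im]

noncomputable def Kc : ℝ := ∑' j : ℤ, 1 / ((j : ℝ)) ^ 2

lemma Kc_summable : Summable (fun j : ℤ => 1 / ((j : ℝ)) ^ 2) :=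
  summable_one_div_int_pow.mpr one_lt_two

lemma Kc_nonneg : 0 ≤ Kc := tsum_nonneg fun j => by positivity

lemma norm_sign_le (m : ℤ) : ‖((Int.sign m : ℂ))‖ ≤ 1 := by
  rcases m with (_ | n) | n <;> simp [Int.sign]

lemma g_summable (n : ℤ) : Summable (fun m : ℤ => 4 / ((m : ℝ) - (n : ℝ)) ^ 2) := by
  have h0 : Summable (fun j : ℤ => 4 * (1 / ((j : ℝ)) ^ 2)) := Kc_summable.mul_left 4
  have h1 := h0.comp_injective (Equiv.subRight n).injective
  refine h1.congr fun m => ?_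
  simp only [Function.comp_apply, Equiv.subRight_apply]
  push_cast
  ring

lemma g_hasSum (n : ℤ) : HasSum (fun m : ℤ => 4 / ((m : ℝ) - (n : ℝ)) ^ 2) (4 * Kc) := by
  have h0 : HasSum (fun j : ℤ => 4 * (1 / ((j : ℝ)) ^ 2)) (4 * Kc) := Kc_summable.hasSum.mul_left 4
  have h1 : HasSum ((fun j : ℤ => 4 * (1 / ((j : ℝ)) ^ 2)) ∘ (Equiv.subRight n)) (4 * Kc) :=
    (Equiv.subRight n).hasSum_iff.mpr h0
  have hfun : (fun m : ℤ => 4 / ((m : ℝ) - (n : ℝ)) ^ 2)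
      = (fun j : ℤ => 4 * (1 / ((j : ℝ)) ^ 2)) ∘ (Equiv.subRight n) := by
    funext m
    simp only [Function.comp_apply, Equiv.subRight_apply]
    push_cast
    ring
  rw [hfun]
  exact h1

lemma term_est {w : ℂ} {n m : ℤ} (hn : |w.re - (n : ℝ)| ≤ 1 / 2) (hm : m ≠ n) :
    ‖(Int.sign m : ℂ) / (w - (m : ℂ)) ^ 2‖ ≤ 4 / ((m : ℝ) - (n : ℝ)) ^ 2 := by
  have h1 : (1 : ℝ) ≤ |(m : ℝ) - (n : ℝ)| := by
    have h : (1 : ℤ) ≤ |m - n| := Int.one_le_abs (sub_ne_zero.mpr hm)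
    calc (1:ℝ) ≤ ((|m - n| : ℤ) : ℝ) := by exact_mod_cast h
    _ = |(m : ℝ) - (n : ℝ)| := by push_cast; ring
  have h2 : |(m : ℝ) - (n : ℝ)| / 2 ≤ ‖w - (m : ℂ)‖ := by
    have h3 : |w.re - (m : ℝ)| ≤ ‖w - (m : ℂ)‖ := by
      have := Complex.abs_re_le_norm (w - (m : ℂ))
      simpa using this
    have h4 : |(m : ℝ) - (n : ℝ)| ≤ |(m:ℝ) - w.re| + |w.re - (n:ℝ)| := abs_sub_le _ _ _
    have h5 : |(m:ℝ) - w.re| = |w.re - (m:ℝ)| := abs_sub_comm _ _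
    linarith
  have h6 : ((m : ℝ) - (n : ℝ)) ^ 2 / 4 ≤ ‖w - (m : ℂ)‖ ^ 2 := by
    have hd : (0:ℝ) ≤ |(m:ℝ) - (n:ℝ)|/2 := by positivity
    have hmm := mul_le_mul h2 h2 hd (norm_nonneg _)
    calc ((m : ℝ) - (n : ℝ)) ^ 2 / 4 = (|(m:ℝ) - (n:ℝ)|/2) * (|(m:ℝ) - (n:ℝ)|/2) := by
          rw [← _root_.sq_abs]; ring
    _ ≤ ‖w - (m : ℂ)‖ * ‖w - (m : ℂ)‖ := hmm
    _ = ‖w - (m : ℂ)‖ ^ 2 := (sq _).symm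
  have h7 : (0:ℝ) < ((m : ℝ) - (n : ℝ)) ^ 2 / 4 := by
    nlinarith [_root_.sq_abs ((m:ℝ) - (n:ℝ))]
  rw [norm_div, norm_pow]
  calc ‖(Int.sign m : ℂ)‖ / ‖w - (m : ℂ)‖ ^ 2 ≤ 1 / (((m : ℝ) - (n : ℝ)) ^ 2 / 4) :=
        div_le_div₀ (by norm_num) (norm_sign_le m) h7 h6
    _ = 4 / ((m : ℝ) - (n : ℝ)) ^ 2 := one_div_div _ _

lemma f_summable (w : ℂ) (hw : ∀ m : ℤ, w ≠ (m : ℂ)) :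
    Summable (fun m : ℤ => (Int.sign m : ℂ) / (w - (m : ℂ)) ^ 2) := by
  have hn : |w.re - (round w.re : ℝ)| ≤ 1 / 2 := abs_sub_round w.re
  refine Summable.of_norm_bounded_eventually (g_summable (round w.re)) ?_
  rw [Filter.eventually_cofinite]
  refine Set.Finite.subset (Set.finite_singleton (round w.re)) ?_
  intro m hm
  simp only [Set.mem_setOf_eq, not_le] at hm
  by_contra hne
  exact absurd (term_est hn hne) (not_le.mpr hm)

lemma tail_bound (w : ℂ) {n : ℤ} (hn : |w.re - (n : ℝ)| ≤ 1 / 2) :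
    ‖∑' m : ℤ, (if m = n then 0 else (Int.sign m : ℂ) / (w - (m : ℂ)) ^ 2)‖ ≤ 4 * Kc := by
  refine tsum_of_norm_bounded (g_hasSum n) ?_
  intro m
  by_cases h : m = n
  · subst h
    simp only [if_pos rfl, norm_zero, sub_self]
    norm_num
  · rw [if_neg h]
    exact term_est hn h

set_option maxHeartbeats 1000000 in
lemma expr_bound (w : ℂ) (hw : ∀ m : ℤ, w ≠ (m : ℂ)) :
    ‖(Complex.sin (π * w) / π) ^ 2 * ((∑' m : ℤ, (Int.sign m : ℂ) / (w - (m : ℂ)) ^ 2) + 2 / w)‖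
      + ‖(Complex.sin (π * w) / (π * w)) ^ 2‖
      ≤ (12 + 4 * Kc) * Real.exp (2 * π * |w.im|) := by
  have hπ : (0:ℝ) < π := Real.pi_pos
  have hπ1 : (1:ℝ) ≤ π := by nlinarith [Real.pi_gt_three]
  set n := round w.re with hn_def
  have hn : |w.re - (n : ℝ)| ≤ 1 / 2 := abs_sub_round w.re
  have hw0 : w ≠ 0 := by simpa using hw 0
  have hwn : w - (n : ℂ) ≠ 0 := sub_ne_zero.mpr (hw n)
  set E := Real.exp (π * |w.im|) with hE_def
  have hE : 0 < E := Real.exp_pos _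
  have hEE : E * E = Real.exp (2 * π * |w.im|) := by
    rw [hE_def, ← Real.exp_add]; ring_nf
  have habs : |((π:ℂ) * w).im| = π * |w.im| := by
    simp only [Complex.mul_im, Complex.ofReal_re, Complex.ofReal_im, zero_mul, add_zero]
    rw [abs_mul, abs_of_pos hπ]
  set s := ‖Complex.sin ((π:ℂ) * w)‖ with hs_def
  set r := ‖w - (n:ℂ)‖ with hr_def
  set a := ‖w‖ with ha_def
  have hr : 0 < r := norm_pos_iff.mpr hwn
  have ha : 0 < a := norm_pos_iff.mpr hw0
  have hs0 : 0 ≤ s := norm_nonneg _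
  have hs1 : s ≤ E := by
    have h := norm_sin_le_exp ((π:ℂ) * w)
    rw [habs] at h
    exact h
  have hs3 : s ≤ 2 * π * a * E := by
    have h := norm_sin_le_mul_exp ((π:ℂ) * w)
    rw [habs] at h
    calc s ≤ 2 * ‖(π:ℂ) * w‖ * E := h
    _ = 2 * π * a * E := by
        rw [norm_mul, Complex.norm_real, Real.norm_eq_abs, abs_of_pos hπ]; ring
  have hs2 : s ≤ 2 * π * r * E := by
    have key : Complex.sin ((π:ℂ) * w)
        = Complex.sin ((π:ℂ) * (w - (n:ℂ))) * Complex.cos ((n:ℂ) * (π:ℂ)) := by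
      have h1 : (π:ℂ) * w = (π:ℂ) * (w - (n:ℂ)) + (n:ℂ) * (π:ℂ) := by ring
      rw [h1, Complex.sin_add, Complex.sin_int_mul_pi, mul_zero, add_zero]
    have hcos : ‖Complex.cos ((n:ℂ) * (π:ℂ))‖ = 1 := by
      have h2 : Complex.cos ((n:ℂ) * (π:ℂ)) = ((Real.cos ((n:ℝ) * π) : ℝ) : ℂ) := by
        rw [Complex.ofReal_cos]; push_cast; ring_nf
      rw [h2, Complex.norm_real, Real.norm_eq_abs, Real.abs_cos_int_mul_pi]
    have him2 : |((π:ℂ) * (w - (n:ℂ))).im| = π * |w.im| := by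
      simp only [Complex.mul_im, Complex.ofReal_re, Complex.ofReal_im, zero_mul, add_zero,
        Complex.sub_im, Complex.intCast_im, sub_zero]
      rw [abs_mul, abs_of_pos hπ]
    have h := norm_sin_le_mul_exp ((π:ℂ) * (w - (n:ℂ)))
    rw [him2] at h
    calc s = ‖Complex.sin ((π:ℂ) * (w - (n:ℂ)))‖ * 1 := by rw [hs_def, key, norm_mul, hcos]
    _ ≤ (2 * ‖(π:ℂ) * (w - (n:ℂ))‖ * E) * 1 := by
        have := mul_le_mul_of_nonneg_right h (zero_le_one (α := ℝ))
        simpa using this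
    _ = 2 * π * r * E := by
        rw [norm_mul, Complex.norm_real, Real.norm_eq_abs, abs_of_pos hπ]; ring
  -- norm computations
  have hX : ‖(Complex.sin ((π:ℂ) * w) / (π:ℂ)) ^ 2‖ = s ^ 2 / π ^ 2 := by
    rw [norm_pow, norm_div, Complex.norm_real, Real.norm_eq_abs, abs_of_pos hπ, div_pow]
  have hY : ‖(Complex.sin ((π:ℂ) * w) / ((π:ℂ) * w)) ^ 2‖ = s ^ 2 / (π ^ 2 * a ^ 2) := by
    rw [norm_pow, norm_div, norm_mul, Complex.norm_real, Real.norm_eq_abs, abs_of_pos hπ,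
      div_pow, mul_pow]
  have hfn : ‖(Int.sign n : ℂ) / (w - (n:ℂ)) ^ 2‖ = ‖(Int.sign n : ℂ)‖ / r ^ 2 := by
    rw [norm_div, norm_pow]
  have h2 : ‖(2:ℂ)‖ = 2 := by
    rw [show ((2:ℂ)) = ((2:ℝ) : ℂ) by norm_num, Complex.norm_real, Real.norm_eq_abs]
    norm_num
  have h2w : ‖(2:ℂ) / w‖ = 2 / a := by
    rw [norm_div, h2]
  have hsum := f_summable w hw
  have hsplit := hsum.tsum_eq_add_tsum_ite n
  have htail := tail_bound w hn
  -- piecewise bounds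
  have hB1 : s ^ 2 / π ^ 2 * (‖(Int.sign n : ℂ)‖ / r ^ 2) ≤ 4 * (E * E) := by
    rw [div_mul_div_comm, div_le_iff₀ (by positivity)]
    have hmul : s * s ≤ (2 * π * r * E) * (2 * π * r * E) :=
      mul_le_mul hs2 hs2 hs0 (by positivity)
    nlinarith [norm_sign_le n, norm_nonneg ((Int.sign n : ℂ)), sq_nonneg s]
  have hB2 : s ^ 2 / π ^ 2 * ‖∑' m : ℤ, (if m = n then 0
        else (Int.sign m : ℂ) / (w - (m : ℂ)) ^ 2)‖ ≤ (E * E) * (4 * Kc) := by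
    have hA_le : s ^ 2 / π ^ 2 ≤ E * E := by
      rw [div_le_iff₀ (by positivity)]
      have h9 := mul_le_mul hs1 hs1 hs0 hE.le
      nlinarith [mul_nonneg (sub_nonneg.mpr hπ1) (mul_nonneg hπ.le (mul_pos hE hE).le),
        mul_pos hE hE]
    exact mul_le_mul hA_le htail (norm_nonneg _) (by positivity)
  have hB3 : s ^ 2 / π ^ 2 * (2 / a) ≤ 4 * (E * E) := by
    rw [div_mul_div_comm, div_le_iff₀ (by positivity)]
    have hmul : s * s ≤ (2 * π * a * E) * E := mul_le_mul hs3 hs1 hs0 (by positivity)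
    have h9 : s ^ 2 ≤ 2 * π * a * (E * E) := by nlinarith
    have h10 : 0 ≤ (π - 1) * (π * (a * (E * E))) :=
      mul_nonneg (sub_nonneg.mpr hπ1) (by positivity)
    nlinarith
  have hB4 : s ^ 2 / (π ^ 2 * a ^ 2) ≤ 4 * (E * E) := by
    rw [div_le_iff₀ (by positivity)]
    have hmul : s * s ≤ (2 * π * a * E) * (2 * π * a * E) :=
      mul_le_mul hs3 hs3 hs0 (by positivity)
    nlinarith [sq_nonneg s]
  -- assemble
  have hdecomp : (Complex.sin ((π:ℂ) * w) / (π:ℂ)) ^ 2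
        * ((∑' m : ℤ, (Int.sign m : ℂ) / (w - (m : ℂ)) ^ 2) + 2 / w)
      = (Complex.sin ((π:ℂ) * w) / (π:ℂ)) ^ 2 * ((Int.sign n : ℂ) / (w - (n:ℂ)) ^ 2)
        + (Complex.sin ((π:ℂ) * w) / (π:ℂ)) ^ 2
          * (∑' m : ℤ, (if m = n then 0 else (Int.sign m : ℂ) / (w - (m : ℂ)) ^ 2))
        + (Complex.sin ((π:ℂ) * w) / (π:ℂ)) ^ 2 * ((2:ℂ) / w) := by
    rw [hsplit]; ring
  calc ‖(Complex.sin ((π:ℂ) * w) / (π:ℂ)) ^ 2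
        * ((∑' m : ℤ, (Int.sign m : ℂ) / (w - (m : ℂ)) ^ 2) + 2 / w)‖
      + ‖(Complex.sin ((π:ℂ) * w) / ((π:ℂ) * w)) ^ 2‖
      ≤ (‖(Complex.sin ((π:ℂ) * w) / (π:ℂ)) ^ 2 * ((Int.sign n : ℂ) / (w - (n:ℂ)) ^ 2)‖
        + ‖(Complex.sin ((π:ℂ) * w) / (π:ℂ)) ^ 2
          * (∑' m : ℤ, (if m = n then 0 else (Int.sign m : ℂ) / (w - (m : ℂ)) ^ 2))‖
        + ‖(Complex.sin ((π:ℂ) * w) / (π:ℂ)) ^ 2 * ((2:ℂ) / w)‖)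
      + ‖(Complex.sin ((π:ℂ) * w) / ((π:ℂ) * w)) ^ 2‖ := by
        rw [hdecomp]
        gcongr
        exact (norm_add_le _ _).trans (by gcongr; exact norm_add_le _ _)
  _ ≤ (4 * (E * E) + (E * E) * (4 * Kc) + 4 * (E * E)) + 4 * (E * E) := by
        rw [hY]
        refine add_le_add (add_le_add (add_le_add ?_ ?_) ?_) ?_
        · rw [norm_mul, hX, hfn]; exact hB1
        · rw [norm_mul, hX]; exact hB2
        · rw [norm_mul, hX, h2w]; exact hB3
        · exact hB4
  _ = (12 + 4 * Kc) * (E * E) := by ring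
  _ = (12 + 4 * Kc) * Real.exp (2 * π * |w.im|) := by rw [hEE]

lemma global_bound (H : ℂ → ℂ) (hcont : Continuous H)
    (h : ∀ w : ℂ, (∀ m : ℤ, w ≠ (m : ℂ)) →
      ‖H w‖ ≤ (12 + 4 * Kc) * Real.exp (2 * π * |w.im|)) :
    ∀ w : ℂ, ‖H w‖ ≤ (12 + 4 * Kc) * Real.exp (2 * π * |w.im|) := by
  have hclosed : IsClosed {w : ℂ | ‖H w‖ ≤ (12 + 4 * Kc) * Real.exp (2 * π * |w.im|)} := by
    apply isClosed_le
    · exact hcont.norm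
    · exact continuous_const.mul (Real.continuous_exp.comp
        (continuous_const.mul (continuous_abs.comp Complex.continuous_im)))
  have hdense : Dense ((Set.range ((↑·) : ℤ → ℂ))ᶜ) :=
    (Set.countable_range _).dense_compl ℂ
  intro w
  have hsub : (Set.range ((↑·) : ℤ → ℂ))ᶜ
      ⊆ {w : ℂ | ‖H w‖ ≤ (12 + 4 * Kc) * Real.exp (2 * π * |w.im|)} := by
    intro u hu
    refine h u fun m hm => hu ⟨m, hm.symm⟩
  exact hclosed.closure_subset_iff.mpr hsub (hdense w)

/-- |R±(z)| ≤ C e^{2πΔ|Im z|} for all complex z, with an absolute constant C. -/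
theorem selberg_exponential_growth
    (Hp Hm : ℂ → ℂ)
    (hHp_entire : Differentiable ℂ Hp) (hHm_entire : Differentiable ℂ Hm)
    (hHp : ∀ z : ℂ, (∀ m : ℤ, z ≠ (m : ℂ)) →
      Hp z = (Complex.sin (π * z) / π) ^ 2 *
          ((∑' m : ℤ, (Int.sign m : ℂ) / (z - (m : ℂ)) ^ 2) + 2 / z)
        + (Complex.sin (π * z) / (π * z)) ^ 2)
    (hHm : ∀ z : ℂ, (∀ m : ℤ, z ≠ (m : ℂ)) →
      Hm z = (Complex.sin (π * z) / π) ^ 2 *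
          ((∑' m : ℤ, (Int.sign m : ℂ) / (z - (m : ℂ)) ^ 2) + 2 / z)
        - (Complex.sin (π * z) / (π * z)) ^ 2) :
    ∃ C : ℝ, ∀ t Δ : ℝ, 0 < t → 0 < Δ → ∀ z : ℂ,
      ‖(Hp ((Δ : ℂ) * ((t : ℂ) + z)) + Hp ((Δ : ℂ) * ((t : ℂ) - z))) / 2‖
          ≤ C * Real.exp (2 * π * Δ * |z.im|) ∧
        ‖(Hm ((Δ : ℂ) * ((t : ℂ) + z)) + Hm ((Δ : ℂ) * ((t : ℂ) - z))) / 2‖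
          ≤ C * Real.exp (2 * π * Δ * |z.im|) := by
  have hp_all : ∀ w : ℂ, ‖Hp w‖ ≤ (12 + 4 * Kc) * Real.exp (2 * π * |w.im|) := by
    refine global_bound Hp hHp_entire.continuous ?_
    intro w hw
    rw [hHp w hw]
    exact (norm_add_le _ _).trans (expr_bound w hw)
  have hm_all : ∀ w : ℂ, ‖Hm w‖ ≤ (12 + 4 * Kc) * Real.exp (2 * π * |w.im|) := by
    refine global_bound Hm hHm_entire.continuous ?_
    intro w hw
    rw [hHm w hw]
    exact (norm_sub_le _ _).trans (expr_bound w hw)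
  refine ⟨12 + 4 * Kc, fun t Δ ht hΔ z => ?_⟩
  set w1 := (Δ : ℂ) * ((t : ℂ) + z) with hw1
  set w2 := (Δ : ℂ) * ((t : ℂ) - z) with hw2
  have h2 : ‖(2:ℂ)‖ = 2 := by
    rw [show ((2:ℂ)) = ((2:ℝ) : ℂ) by norm_num, Complex.norm_real, Real.norm_eq_abs]
    norm_num
  have him1 : |w1.im| = Δ * |z.im| := by
    rw [hw1]
    simp only [Complex.mul_im, Complex.ofReal_re, Complex.ofReal_im, zero_mul, add_zero,
      Complex.add_im, Complex.ofReal_im, zero_add]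
    rw [abs_mul, abs_of_pos hΔ]
  have him2 : |w2.im| = Δ * |z.im| := by
    rw [hw2]
    simp only [Complex.mul_im, Complex.ofReal_re, Complex.ofReal_im, zero_mul, add_zero,
      Complex.sub_im, Complex.ofReal_im, zero_sub]
    rw [abs_mul, abs_of_pos hΔ, abs_neg]
  have key : ∀ H : ℂ → ℂ, (∀ w : ℂ, ‖H w‖ ≤ (12 + 4 * Kc) * Real.exp (2 * π * |w.im|)) →
      ‖(H w1 + H w2) / 2‖ ≤ (12 + 4 * Kc) * Real.exp (2 * π * Δ * |z.im|) := by
    intro H hH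
    have e1 : Real.exp (2 * π * |w1.im|) = Real.exp (2 * π * Δ * |z.im|) := by
      rw [him1]; ring_nf
    have e2 : Real.exp (2 * π * |w2.im|) = Real.exp (2 * π * Δ * |z.im|) := by
      rw [him2]; ring_nf
    have b1 := hH w1; have b2 := hH w2
    rw [e1] at b1; rw [e2] at b2
    calc ‖(H w1 + H w2) / 2‖ = ‖H w1 + H w2‖ / 2 := by rw [norm_div, h2]
    _ ≤ (‖H w1‖ + ‖H w2‖) / 2 := by
        have := norm_add_le (H w1) (H w2); linarith
    _ ≤ (12 + 4 * Kc) * Real.exp (2 * π * Δ * |z.im|) := by linarith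
  exact ⟨key Hp hp_all, key Hm hm_all⟩
end

section
/- Let t and Δ be positive real numbers and let R±(z) = (1/2)·{H±(Δ(t+z)) + H±(Δ(t-z))}. Then there is an absolute constant C such that |R±(x)| ≤ C·min(1, Δ^{-2}·(|x| - t)^{-2}) for all real x with |x| > t. -/
open Complex Real Filter MeasureTheory
open Set AddCircle

noncomputable section


lemma summable_int_inv_sq (x : ℝ) : Summable (fun n : ℤ => ((x - n)^2)⁻¹) := by
  have hg : Summable (fun n : ℤ => 4 * (1 / ((n:ℝ))^2)) :=
    (Real.summable_one_div_int_pow.mpr one_lt_two).mul_left 4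
  refine .of_norm_bounded_eventually hg ?_
  rw [Filter.eventually_cofinite]
  apply Set.Finite.subset (Set.finite_Icc (-(⌈2*|x|+1⌉ : ℤ)) ⌈2*|x|+1⌉)
  intro n hn
  simp only [Set.mem_setOf_eq] at hn
  rw [Set.mem_Icc, ← abs_le]
  by_contra hc
  push_neg at hc
  apply hn
  have h1 : 2*|x|+1 ≤ |(n:ℝ)| := by
    calc 2*|x|+1 ≤ (⌈2*|x|+1⌉ : ℝ) := Int.le_ceil _
    _ ≤ (|n| : ℤ) := by exact_mod_cast hc.le
    _ = |(n:ℝ)| := Int.cast_abs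
  have h2 : |(n:ℝ)|/2 ≤ |x - n| := by
    have h3 := abs_sub_abs_le_abs_sub (n:ℝ) x
    rw [abs_sub_comm (n:ℝ) x] at h3
    linarith [abs_nonneg x]
  have hn0 : (0:ℝ) < (n:ℝ)^2 := by nlinarith [abs_nonneg x, _root_.sq_abs (n:ℝ)]
  have h4 : (n:ℝ)^2/4 ≤ (x - n)^2 := by
    nlinarith [_root_.sq_abs (x - n), _root_.sq_abs (n:ℝ), abs_nonneg (x - n), abs_nonneg (n:ℝ)]
  rw [Real.norm_eq_abs, _root_.abs_of_nonneg (by positivity : (0:ℝ) ≤ ((x - n)^2)⁻¹)]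
  calc ((x - n)^2)⁻¹ ≤ ((n:ℝ)^2/4)⁻¹ := by
        apply inv_anti₀ (by linarith) h4
    _ = 4 * (1 / (n:ℝ)^2) := by field_simp

lemma parseval_id (x : ℝ) (hx : ∀ m : ℤ, x ≠ (m:ℝ)) :
    ∑' n : ℤ, ((x - (n:ℝ))^2)⁻¹ = π^2 / Real.sin (π * x)^2 := by
  haveI : Fact ((0:ℝ) < 1) := ⟨one_pos⟩
  set f : ℝ → ℂ := fun t => Complex.exp (2*π*Complex.I*x*t) with hfdef
  have hcont : Continuous f :=
    Complex.continuous_exp.comp (continuous_const.mul Complex.continuous_ofReal)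
  set g : AddCircle (1:ℝ) → ℂ := AddCircle.liftIoc 1 0 f with hgdef
  have hmeas : Measurable g := by
    exact ((hcont.measurable.comp measurable_subtype_coe).comp
      (AddCircle.measurableEquivIoc (1:ℝ) 0).measurable)
  have hnorm : ∀ y, ‖g y‖ = 1 := by
    intro y
    show ‖f _‖ = 1
    rw [hfdef]
    simp only [Complex.norm_exp]
    norm_num [Complex.mul_re]
  have hmem : MemLp g 2 haarAddCircle :=
    MemLp.of_bound hmeas.aestronglyMeasurable 1 (Filter.Eventually.of_forall fun y => (hnorm y).le)
  set F := hmem.toLp g with hF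
  have hparseval := tsum_sq_fourierCoeff F
  have hcoe : ∀ n : ℤ, fourierCoeff (⇑F) n = fourierCoeff g n := by
    intro n
    unfold fourierCoeff
    apply integral_congr_ae
    filter_upwards [hmem.coeFn_toLp] with y hy
    rw [hy]
  have hcoeff : ∀ n : ℤ, fourierCoeff g n =
      (Complex.exp (2*π*Complex.I*((x:ℝ) - n)) - 1) / (2*π*Complex.I*((x:ℝ) - n)) := by
    intro n
    have hc : (2*(π:ℂ)*Complex.I*((x:ℝ) - n) : ℂ) ≠ 0 := by
      apply mul_ne_zero
      apply mul_ne_zero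
      apply mul_ne_zero two_ne_zero
      · exact_mod_cast Complex.ofReal_ne_zero.mpr Real.pi_ne_zero
      · exact Complex.I_ne_zero
      · rw [sub_ne_zero]
        exact_mod_cast fun h => hx n (by exact_mod_cast h)
    rw [hgdef, fourierCoeff_liftIoc_eq, fourierCoeffOn_eq_integral]
    have hint : ∀ t ∈ Set.uIcc (0:ℝ) (0+1), (fourier (-n) (t : AddCircle (0+1-(0:ℝ))) : ℂ) • f t
        = Complex.exp ((2*π*Complex.I*((x:ℝ) - n)) * t) := by
      intro t _
      rw [fourier_coe_apply, smul_eq_mul, hfdef, ← Complex.exp_add]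
      congr 1
      push_cast
      field_simp
      ring
    rw [intervalIntegral.integral_congr hint, integral_exp_mul_complex hc]
    norm_num
  have hxn : ∀ n : ℤ, x - (n:ℝ) ≠ 0 := fun n => sub_ne_zero.mpr (hx n)
  have hnormsq : ∀ n : ℤ, ‖fourierCoeff (⇑F) n‖^2
      = Real.sin (π*x)^2/π^2 * ((x - (n:ℝ))^2)⁻¹ := by
    intro n
    rw [hcoe n, hcoeff n, norm_div]
    have hθ : (2*(π:ℂ)*Complex.I*((x:ℝ) - (n:ℤ)) : ℂ) = ((2*π*(x - n) : ℝ) : ℂ) * Complex.I := by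
      push_cast; ring
    rw [hθ, norm_mul, Complex.norm_I, mul_one]
    have hden : ‖((2*π*(x - (n:ℝ)) : ℝ) : ℂ)‖^2 = (2*π*(x-(n:ℝ)))^2 := by
      rw [Complex.norm_real]; exact _root_.sq_abs _
    have hnum : ‖Complex.exp (((2*π*(x - (n:ℝ)) : ℝ) : ℂ) * Complex.I) - 1‖^2
        = 4 * Real.sin (π*(x - (n:ℝ)))^2 := by
      rw [Complex.sq_norm, Complex.normSq_apply, Complex.sub_re,
        Complex.sub_im, Complex.one_re, Complex.one_im, Complex.exp_ofReal_mul_I_re,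
        Complex.exp_ofReal_mul_I_im]
      have h2 : 2*π*(x - (n:ℝ)) = 2*(π*(x - (n:ℝ))) := by ring
      rw [h2]
      have hc2 := Real.cos_two_mul (π*(x - (n:ℝ)))
      have hs2 := Real.sin_sq_add_cos_sq (2*(π*(x - (n:ℝ))))
      have hs1 := Real.sin_sq_add_cos_sq (π*(x - (n:ℝ)))
      nlinarith
    have hper : Real.sin (π*(x - (n:ℝ)))^2 = Real.sin (π*x)^2 := by
      have h0 : π*(x - (n:ℝ)) = π*x - (n:ℝ)*π := by ring
      have hc2 : Real.cos ((n:ℝ)*π)^2 = 1 := by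
        have h3 := Real.sin_sq_add_cos_sq ((n:ℝ)*π)
        rw [Real.sin_int_mul_pi] at h3; nlinarith
      rw [h0, Real.sin_sub, Real.sin_int_mul_pi, mul_zero, sub_zero, mul_pow, hc2, mul_one]
    rw [div_pow, hnum, hden, hper]
    have hπ := Real.pi_ne_zero
    have hxn' := hxn n
    field_simp
    ring
  have hrhs : ∫ (t : AddCircle (1:ℝ)), ‖(⇑F : AddCircle (1:ℝ) → ℂ) t‖^2 ∂haarAddCircle = 1 := by
    have hae : (fun t => ‖(⇑F : AddCircle (1:ℝ) → ℂ) t‖^2) =ᵐ[haarAddCircle] (fun _ => (1:ℝ)) := by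
      filter_upwards [hmem.coeFn_toLp] with y hy
      rw [hy, hnorm y]; norm_num
    rw [integral_congr_ae hae]
    simp
  have h1 : Real.sin (π*x)^2/π^2 * ∑' n : ℤ, ((x - (n:ℝ))^2)⁻¹ = 1 := by
    calc Real.sin (π*x)^2/π^2 * ∑' n : ℤ, ((x - (n:ℝ))^2)⁻¹
        = ∑' n : ℤ, (Real.sin (π*x)^2/π^2 * ((x - (n:ℝ))^2)⁻¹) := tsum_mul_left.symm
      _ = ∑' n : ℤ, ‖fourierCoeff (⇑F) n‖^2 := tsum_congr fun n => (hnormsq n).symm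
      _ = 1 := hparseval.trans hrhs
  have hsin : Real.sin (π*x) ≠ 0 := by
    intro h
    rcases Real.sin_eq_zero_iff.mp h with ⟨m, hm⟩
    apply hx m
    have hπ := Real.pi_ne_zero
    have h2 : π * (m:ℝ) = π * x := by linarith [hm]
    exact (mul_left_cancel₀ hπ h2).symm
  have hπ := Real.pi_ne_zero
  rw [eq_div_iff (pow_ne_zero 2 hsin)]
  rw [div_mul_eq_mul_div, div_eq_one_iff_eq (pow_ne_zero 2 hπ)] at h1
  linear_combination h1




lemma sin_pi_mul_ne (x : ℝ) (hx : ∀ m : ℤ, x ≠ (m:ℝ)) : Real.sin (π * x) ≠ 0 := by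
  intro h
  rcases Real.sin_eq_zero_iff.mp h with ⟨m, hm⟩
  apply hx m
  have hπ := Real.pi_ne_zero
  have h2 : π * (m:ℝ) = π * x := by linarith [hm]
  exact (mul_left_cancel₀ hπ h2).symm

-- telescoping sum: ∑_{k≥0} ((x+k)⁻¹ - (x+k+1)⁻¹) = x⁻¹ for x > 0
lemma hasSum_telescope (x : ℝ) (hx0 : 0 < x) :
    HasSum (fun k : ℕ => (x+k)⁻¹ - (x+k+1)⁻¹) x⁻¹ := by
  have hpos : ∀ k : ℕ, (0:ℝ) < x + k := fun k => by positivity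
  have hnn : ∀ k : ℕ, (0:ℝ) ≤ (x+k)⁻¹ - (x+k+1)⁻¹ := by
    intro k
    have h1 := hpos k
    rw [sub_nonneg]
    apply inv_anti₀ h1 (by linarith)
  rw [hasSum_iff_tendsto_nat_of_nonneg hnn]
  have hsum : ∀ n : ℕ, ∑ k ∈ Finset.range n, ((x+k)⁻¹ - (x+k+1)⁻¹) = x⁻¹ - (x+n)⁻¹ := by
    intro n
    have := Finset.sum_range_sub' (fun k : ℕ => (x+(k:ℝ))⁻¹) n
    push_cast at this
    rw [add_zero] at this
    rw [← this]
    exact Finset.sum_congr rfl fun k _ => by ring_nf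
  simp_rw [hsum]
  have h2 : Tendsto (fun n : ℕ => (x+n)⁻¹) atTop (nhds 0) := by
    apply Filter.Tendsto.comp tendsto_inv_atTop_zero
    apply tendsto_atTop_add_const_left
    exact tendsto_natCast_atTop_atTop
  have := (tendsto_const_nhds (x := x⁻¹) (f := atTop (α := ℕ))).sub h2
  simpa using this

lemma Sp_summable (x : ℝ) (hx0 : 0 < x) :
    Summable (fun k : ℕ => ((x+k+1)^2)⁻¹) := by
  refine Summable.of_nonneg_of_le (fun k => by positivity) (fun k => ?_)
    (hasSum_telescope x hx0).summable
  have h1 : (0:ℝ) < x + k := by positivity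
  have h2 : (0:ℝ) < x + k + 1 := by linarith
  have h3 : (x+k)⁻¹ - (x+k+1)⁻¹ = ((x+k)*(x+k+1))⁻¹ := by
    field_simp
    ring
  rw [h3]
  apply inv_anti₀ (by positivity)
  nlinarith

lemma Sp_bounds (x : ℝ) (hx0 : 0 < x) :
    (x+1)⁻¹ ≤ ∑' k : ℕ, ((x+k+1)^2)⁻¹ ∧ ∑' k : ℕ, ((x+k+1)^2)⁻¹ ≤ x⁻¹ := by
  constructor
  · have htel : HasSum (fun k : ℕ => ((x+1)+k)⁻¹ - ((x+1)+k+1)⁻¹) (x+1)⁻¹ :=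
      hasSum_telescope (x+1) (by linarith)
    rw [← htel.tsum_eq]
    apply Summable.tsum_le_tsum _ htel.summable (Sp_summable x hx0)
    intro k
    have h1 : (0:ℝ) < x + k + 1 := by positivity
    have h2 : (0:ℝ) < x + k + 2 := by linarith
    have h3 : (x+(k:ℝ)+1)⁻¹ - (x+(k:ℝ)+1+1)⁻¹ = ((x+(k:ℝ)+1)*(x+(k:ℝ)+2))⁻¹ := by
      rw [inv_sub_inv (by positivity) (by positivity),
        show x+(k:ℝ)+1+1 - (x+(k:ℝ)+1) = (1:ℝ) by ring,
        show (x+(k:ℝ)+1)*(x+(k:ℝ)+1+1) = (x+(k:ℝ)+1)*(x+(k:ℝ)+2) by ring, one_div]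
    calc (x+1+(k:ℝ))⁻¹ - (x+1+(k:ℝ)+1)⁻¹
        = (x+(k:ℝ)+1)⁻¹ - (x+(k:ℝ)+1+1)⁻¹ := by ring_nf
      _ = ((x+(k:ℝ)+1)*(x+(k:ℝ)+2))⁻¹ := h3
      _ ≤ ((x+(k:ℝ)+1)^2)⁻¹ := by
          apply inv_anti₀ (by positivity)
          nlinarith
  · rw [← (hasSum_telescope x hx0).tsum_eq]
    apply Summable.tsum_le_tsum _ (Sp_summable x hx0) (hasSum_telescope x hx0).summable
    intro k
    have h1 : (0:ℝ) < x + k := by positivity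
    have h2 : (0:ℝ) < x + k + 1 := by linarith
    have h3 : (x+k)⁻¹ - (x+k+1)⁻¹ = ((x+k)*(x+k+1))⁻¹ := by field_simp; ring
    rw [h3]
    apply inv_anti₀ (by positivity)
    nlinarith

lemma abs_sign_le (n : ℤ) : |(n.sign : ℝ)| ≤ 1 := by
  rcases lt_trichotomy n 0 with h | h | h
  · rw [Int.sign_eq_neg_one_iff_neg.mpr h]; norm_num
  · rw [h, Int.sign_zero]; norm_num
  · rw [Int.sign_eq_one_iff_pos.mpr h]; norm_num

lemma summable_sgn (x : ℝ) : Summable (fun n : ℤ => (n.sign : ℝ) / (x - n)^2) := by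
  apply Summable.of_norm_bounded (summable_int_inv_sq x)
  intro n
  rw [Real.norm_eq_abs, abs_div, _root_.abs_of_nonneg (sq_nonneg (x - (n:ℝ)))]
  rcases eq_or_ne ((x - (n:ℝ))^2) 0 with h | h
  · simp [h]
  · have hpos : 0 < (x - (n:ℝ))^2 := (sq_nonneg _).lt_of_ne (Ne.symm h)
    rw [div_le_iff₀ hpos, inv_mul_cancel₀ h]
    exact abs_sign_le n

lemma tsum_sgn_eq (x : ℝ) :
    ∑' n : ℤ, (n.sign : ℝ) / (x - n)^2
      = (∑' n : ℤ, ((x - n)^2)⁻¹) - (x^2)⁻¹ - 2 * ∑' k : ℕ, ((x+k+1)^2)⁻¹ := by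
  set a : ℤ → ℝ := fun n => ((x - n)^2)⁻¹ with ha_def
  set b : ℤ → ℝ := fun n => if n = 0 then (x^2)⁻¹ else 0 with hb_def
  set c : ℤ → ℝ := fun n => if n < 0 then 2*((x - n)^2)⁻¹ else 0 with hc_def
  have ha : Summable a := summable_int_inv_sq x
  have hb : Summable b :=
    summable_of_ne_finset_zero (s := {0}) (fun n hn => if_neg (by simpa using hn))
  have hc : Summable c := by
    apply Summable.of_nonneg_of_le (fun n => by
      rw [hc_def]; dsimp only; split <;> positivity) (fun n => ?_) (ha.mul_left 2)
    rw [hc_def]; dsimp only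
    split
    · exact le_rfl
    · positivity
  have hdecomp : ∀ n : ℤ, (n.sign : ℝ) / (x - n)^2 = a n - b n - c n := by
    intro n
    rw [ha_def, hb_def, hc_def]
    dsimp only
    rcases lt_trichotomy n 0 with h | h | h
    · rw [Int.sign_eq_neg_one_iff_neg.mpr h, if_neg (by omega), if_pos h]
      rw [div_eq_mul_inv]
      push_cast
      ring
    · rw [h]
      norm_num
    · rw [Int.sign_eq_one_iff_pos.mpr h, if_neg (by omega), if_neg (by omega)]
      rw [div_eq_mul_inv]
      ring
  have hcsum : ∑' n : ℤ, c n = 2 * ∑' k : ℕ, ((x+k+1)^2)⁻¹ := by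
    set e : ℕ → ℤ := fun k => -((k : ℤ) + 1) with he_def
    have hinj : Function.Injective e := by
      intro i j hij
      rw [he_def] at hij
      simpa using hij
    have hzero : ∀ n : ℤ, n ∉ Set.range e → c n = 0 := by
      intro n hn
      rw [hc_def]
      dsimp only
      rw [if_neg]
      intro hneg
      apply hn
      refine ⟨(-n - 1).toNat, ?_⟩
      rw [he_def]
      have h1 : (0:ℤ) ≤ -n - 1 := by omega
      simp only []
      rw [Int.toNat_of_nonneg h1]
      ring
    have hsupp : Function.support c ⊆ Set.range e := by
      intro n hn
      rw [Function.mem_support] at hn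
      by_contra hmem
      exact hn (hzero n hmem)
    rw [← hinj.tsum_eq hsupp]
    have hterm : ∀ k : ℕ, c (e k) = 2 * ((x+k+1)^2)⁻¹ := by
      intro k
      rw [hc_def, he_def]
      dsimp only
      rw [if_pos (by omega)]
      congr 2
      push_cast
      ring
    rw [tsum_congr hterm, tsum_mul_left]
  have hbsum : ∑' n : ℤ, b n = (x^2)⁻¹ := by
    rw [hb_def]
    exact tsum_ite_eq (0:ℤ) (fun _ => (x^2)⁻¹)
  calc ∑' n : ℤ, (n.sign : ℝ) / (x - n)^2 = ∑' n : ℤ, (a n - b n - c n) :=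
        tsum_congr hdecomp
    _ = (∑' n : ℤ, (a n - b n)) - ∑' n : ℤ, c n := Summable.tsum_sub (ha.sub hb) hc
    _ = ((∑' n : ℤ, a n) - ∑' n : ℤ, b n) - ∑' n : ℤ, c n := by rw [Summable.tsum_sub ha hb]
    _ = (∑' n : ℤ, ((x - n)^2)⁻¹) - (x^2)⁻¹ - 2 * ∑' k : ℕ, ((x+k+1)^2)⁻¹ := by
        rw [hbsum, hcsum]

lemma real_bound (x : ℝ) (hx0 : 0 < x) (hx : ∀ m : ℤ, x ≠ (m:ℝ)) (ε : ℝ) (hε : |ε| ≤ 1) :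
    |(Real.sin (π*x)/π)^2 * ((∑' n : ℤ, (n.sign : ℝ) / (x - n)^2) + 2/x)
      + ε*(Real.sin (π*x)/(π*x))^2 - 1| ≤ 2 * min 1 ((x^2)⁻¹) := by
  rw [tsum_sgn_eq x, parseval_id x hx]
  set s := Real.sin (π*x) with hs_def
  set Sp := ∑' k : ℕ, ((x+k+1)^2)⁻¹ with hSp_def
  have hs : s ≠ 0 := sin_pi_mul_ne x hx
  have hπ := Real.pi_pos
  have hx' : x ≠ 0 := ne_of_gt hx0
  have hA : (s/π)^2 * ((π^2/s^2 - (x^2)⁻¹ - 2*Sp) + 2/x) + ε*(s/(π*x))^2 - 1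
      = (s/π)^2 * (2/x - (x^2)⁻¹ - 2*Sp) + ε*(s/(π*x))^2 := by
    field_simp
    ring
  rw [hA]
  have habs : |2/x - (x^2)⁻¹ - 2*Sp| ≤ (x^2)⁻¹ := by
    have hSpb := Sp_bounds x hx0
    have ha : 0 < x⁻¹ := by positivity
    have hb : 0 < (x+1)⁻¹ := by positivity
    have hba : (x+1)⁻¹ ≤ x⁻¹ := inv_anti₀ hx0 (by linarith)
    have hab' : x⁻¹ - (x+1)⁻¹ = x⁻¹ * (x+1)⁻¹ := by field_simp; ring
    have hsq : (x^2)⁻¹ = x⁻¹ * x⁻¹ := by rw [pow_two, mul_inv]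
    have hdiv : 2/x = 2 * x⁻¹ := by rw [div_eq_mul_inv]
    rw [abs_le, hdiv, hsq]
    constructor
    · linarith [hSpb.2]
    · linarith [hSpb.1, hab', mul_le_mul_of_nonneg_left hba ha.le]
  have hx2 : (0:ℝ) < x^2 := by positivity
  have hs2 : s^2 ≤ 1 := Real.sin_sq_le_one (π*x)
  have hs2' : s^2 ≤ π^2 * x^2 := by
    have h5 := Real.sin_sq_le_sq (x := π*x)
    rwa [mul_pow] at h5
  have hπ2 : (1:ℝ) ≤ π^2 := by nlinarith [Real.pi_gt_three]
  have heq : (s/π)^2 * (x^2)⁻¹ = s^2/(π^2*x^2) := by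
    rw [div_pow]; field_simp
  have heq2 : (s/(π*x))^2 = s^2/(π^2*x^2) := by rw [div_pow, mul_pow]
  have ht1 : s^2/(π^2*x^2) ≤ 1 := by
    rw [div_le_one (by positivity)]; exact hs2'
  have ht2 : s^2/(π^2*x^2) ≤ (x^2)⁻¹ := by
    rw [div_le_iff₀ (by positivity),
      show (x^2)⁻¹*(π^2*x^2) = π^2*((x^2)⁻¹*x^2) by ring,
      inv_mul_cancel₀ (ne_of_gt hx2), mul_one]
    linarith
  have htm : s^2/(π^2*x^2) ≤ min 1 ((x^2)⁻¹) := le_min ht1 ht2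
  calc |(s/π)^2 * (2/x - (x^2)⁻¹ - 2*Sp) + ε*(s/(π*x))^2|
      ≤ |(s/π)^2 * (2/x - (x^2)⁻¹ - 2*Sp)| + |ε*(s/(π*x))^2| := abs_add_le _ _
    _ = (s/π)^2 * |2/x - (x^2)⁻¹ - 2*Sp| + |ε| * (s/(π*x))^2 := by
        rw [abs_mul, abs_mul, _root_.abs_of_nonneg (sq_nonneg (s/π)),
          _root_.abs_of_nonneg (sq_nonneg (s/(π*x)))]
    _ ≤ (s/π)^2 * (x^2)⁻¹ + 1 * (s/(π*x))^2 := by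
        apply add_le_add
        · exact mul_le_mul_of_nonneg_left habs (sq_nonneg _)
        · exact mul_le_mul_of_nonneg_right hε (sq_nonneg _)
    _ = s^2/(π^2*x^2) + s^2/(π^2*x^2) := by rw [heq, one_mul, heq2]
    _ ≤ 2 * min 1 ((x^2)⁻¹) := by linarith

lemma Hcore (x : ℝ) (hx0 : 0 < x) (hx : ∀ m : ℤ, x ≠ (m:ℝ)) (ε : ℝ) (hε : |ε| ≤ 1) :
    ‖(Complex.sin (π * (x:ℂ)) / π)^2 * ((∑' m : ℤ, ((Int.sign m : ℂ))/((x:ℂ) - m)^2) + 2/(x:ℂ))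
      + (ε:ℂ) * (Complex.sin (π * (x:ℂ))/(π * (x:ℂ)))^2 - 1‖ ≤ 2 * min 1 ((x^2)⁻¹) := by
  have hts : (∑' m : ℤ, ((Int.sign m : ℂ))/((x:ℂ) - m)^2)
      = (((∑' n : ℤ, (n.sign : ℝ) / (x - n)^2) : ℝ) : ℂ) := by
    rw [Complex.ofReal_tsum]
    exact tsum_congr fun n => by push_cast; ring
  rw [hts]
  set T := ∑' n : ℤ, (n.sign : ℝ) / (x - n)^2 with hT_def
  have hexpr : (Complex.sin (π * (x:ℂ)) / π)^2 * ((T:ℝ) + 2/(x:ℂ))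
        + (ε:ℂ)*(Complex.sin (π * (x:ℂ))/(π * (x:ℂ)))^2 - 1
      = (((Real.sin (π*x)/π)^2 * (T + 2/x) + ε*(Real.sin (π*x)/(π*x))^2 - 1 : ℝ) : ℂ) := by
    push_cast
    ring
  rw [hexpr, Complex.norm_real, Real.norm_eq_abs]
  exact real_bound x hx0 hx ε hε




def NonInt : Set ℝ := {y : ℝ | ∀ m : ℤ, y ≠ (m:ℝ)}

lemma dense_nonInt : Dense NonInt := by
  have h1 : NonInt = (Set.range ((↑) : ℤ → ℝ))ᶜ := by
    ext y
    simp only [NonInt, Set.mem_setOf_eq, Set.mem_compl_iff, Set.mem_range, not_exists]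
    exact ⟨fun h m hm => h m hm.symm, fun h m hm => h m hm.symm⟩
  rw [h1]
  exact (Set.countable_range _).dense_compl ℝ

lemma nonInt_complex (y : ℝ) (hy : y ∈ NonInt) : ∀ m : ℤ, (y:ℂ) ≠ (m:ℂ) := by
  intro m h
  exact hy m (by exact_mod_cast h)

section Main

variable (Hp Hm : ℂ → ℂ)
variable (hHp_entire : Differentiable ℂ Hp) (hHm_entire : Differentiable ℂ Hm)
variable (hHp : ∀ z : ℂ, (∀ m : ℤ, z ≠ (m : ℂ)) →
      Hp z = (Complex.sin (π * z) / π) ^ 2 *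
          ((∑' m : ℤ, (Int.sign m : ℂ) / (z - (m : ℂ)) ^ 2) + 2 / z)
        + (Complex.sin (π * z) / (π * z)) ^ 2)
variable (hHm : ∀ z : ℂ, (∀ m : ℤ, z ≠ (m : ℂ)) →
      Hm z = (Complex.sin (π * z) / π) ^ 2 *
          ((∑' m : ℤ, (Int.sign m : ℂ) / (z - (m : ℂ)) ^ 2) + 2 / z)
        - (Complex.sin (π * z) / (π * z)) ^ 2)

include hHp in
lemma Hp_bound_noninteger (y : ℝ) (hy0 : 0 < y) (hy : y ∈ NonInt) :
    ‖Hp (y:ℂ) - 1‖ ≤ 2 * min 1 ((y^2)⁻¹) := by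
  rw [hHp (y:ℂ) (nonInt_complex y hy)]
  have h := Hcore y hy0 hy 1 (by norm_num)
  norm_num at h
  convert h using 3

include hHm in
lemma Hm_bound_noninteger (y : ℝ) (hy0 : 0 < y) (hy : y ∈ NonInt) :
    ‖Hm (y:ℂ) - 1‖ ≤ 2 * min 1 ((y^2)⁻¹) := by
  rw [hHm (y:ℂ) (nonInt_complex y hy)]
  have h := Hcore y hy0 hy (-1) (by norm_num)
  norm_num at h
  convert h using 3
  ring

include hHp hHp_entire in
lemma Hp_bound_pos (x : ℝ) (hx0 : 0 < x) : ‖Hp (x:ℂ) - 1‖ ≤ 2 * min 1 ((x^2)⁻¹) := by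
  haveI : (nhdsWithin x NonInt).NeBot :=
    mem_closure_iff_nhdsWithin_neBot.mp (dense_nonInt x)
  have hf : Tendsto (fun y : ℝ => ‖Hp (y:ℂ) - 1‖) (nhdsWithin x NonInt) (nhds ‖Hp (x:ℂ) - 1‖) :=
    (((hHp_entire.continuous.comp Complex.continuous_ofReal).sub
      continuous_const).norm.continuousAt).continuousWithinAt
  have hg : Tendsto (fun y : ℝ => 2 * min 1 ((y^2)⁻¹)) (nhdsWithin x NonInt)
      (nhds (2 * min 1 ((x^2)⁻¹))) := by
    apply ContinuousAt.continuousWithinAt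
    exact continuousAt_const.mul (continuousAt_const.min
      ((continuousAt_id.pow 2).inv₀ (pow_ne_zero 2 hx0.ne')))
  apply le_of_tendsto_of_tendsto hf hg
  filter_upwards [self_mem_nhdsWithin,
    ((eventually_gt_nhds hx0).filter_mono nhdsWithin_le_nhds)] with y hyS hy0
  exact Hp_bound_noninteger Hp hHp y hy0 hyS

include hHm hHm_entire in
lemma Hm_bound_pos (x : ℝ) (hx0 : 0 < x) : ‖Hm (x:ℂ) - 1‖ ≤ 2 * min 1 ((x^2)⁻¹) := by
  haveI : (nhdsWithin x NonInt).NeBot :=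
    mem_closure_iff_nhdsWithin_neBot.mp (dense_nonInt x)
  have hf : Tendsto (fun y : ℝ => ‖Hm (y:ℂ) - 1‖) (nhdsWithin x NonInt) (nhds ‖Hm (x:ℂ) - 1‖) :=
    (((hHm_entire.continuous.comp Complex.continuous_ofReal).sub
      continuous_const).norm.continuousAt).continuousWithinAt
  have hg : Tendsto (fun y : ℝ => 2 * min 1 ((y^2)⁻¹)) (nhdsWithin x NonInt)
      (nhds (2 * min 1 ((x^2)⁻¹))) := by
    apply ContinuousAt.continuousWithinAt
    exact continuousAt_const.mul (continuousAt_const.min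
      ((continuousAt_id.pow 2).inv₀ (pow_ne_zero 2 hx0.ne')))
  apply le_of_tendsto_of_tendsto hf hg
  filter_upwards [self_mem_nhdsWithin,
    ((eventually_gt_nhds hx0).filter_mono nhdsWithin_le_nhds)] with y hyS hy0
  exact Hm_bound_noninteger Hm hHm y hy0 hyS

-- the sign-sum is odd
lemma tsum_sgn_odd (y : ℝ) :
    (∑' m : ℤ, (Int.sign m : ℂ) / ((-(y:ℂ)) - m)^2)
      = -(∑' m : ℤ, (Int.sign m : ℂ) / ((y:ℂ) - m)^2) := by
  rw [← (Equiv.neg ℤ).tsum_eq (fun m : ℤ => (Int.sign m : ℂ) / ((-(y:ℂ)) - m)^2)]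
  rw [← tsum_neg]
  apply tsum_congr
  intro m
  have h1 : (Equiv.neg ℤ) m = -m := rfl
  rw [h1, Int.sign_neg]
  push_cast
  rw [show (-(y:ℂ) - (-(m:ℂ)))^2 = ((y:ℂ) - m)^2 by ring]
  ring

lemma neg_nonint (y : ℝ) (hy : y ∈ NonInt) : ∀ m : ℤ, (-(y:ℂ)) ≠ (m:ℂ) := by
  intro m h
  apply hy (-m)
  have h2 : (y:ℂ) = ((-m : ℤ):ℂ) := by push_cast; linear_combination -h
  exact_mod_cast h2

include hHp hHm hHp_entire hHm_entire in
lemma odd_rel1 : ∀ y : ℝ, Hp (-(y:ℂ)) = -Hm (y:ℂ) := by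
  have hcont1 : Continuous (fun y : ℝ => Hp (-(y:ℂ))) :=
    hHp_entire.continuous.comp Complex.continuous_ofReal.neg
  have hcont2 : Continuous (fun y : ℝ => -Hm (y:ℂ)) :=
    (hHm_entire.continuous.comp Complex.continuous_ofReal).neg
  have key : Set.EqOn (fun y : ℝ => Hp (-(y:ℂ))) (fun y : ℝ => -Hm (y:ℂ)) NonInt := by
    intro y hy
    simp only
    rw [hHp _ (neg_nonint y hy), hHm _ (nonInt_complex y hy), tsum_sgn_odd]
    rw [show (π:ℂ) * -(y:ℂ) = -((π:ℂ)*(y:ℂ)) by ring, Complex.sin_neg]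
    ring
  have hfg := Continuous.ext_on dense_nonInt hcont1 hcont2 key
  exact fun y => congrFun hfg y

include hHp hHm hHp_entire hHm_entire in
lemma odd_rel2 : ∀ y : ℝ, Hm (-(y:ℂ)) = -Hp (y:ℂ) := by
  have hcont1 : Continuous (fun y : ℝ => Hm (-(y:ℂ))) :=
    hHm_entire.continuous.comp Complex.continuous_ofReal.neg
  have hcont2 : Continuous (fun y : ℝ => -Hp (y:ℂ)) :=
    (hHp_entire.continuous.comp Complex.continuous_ofReal).neg
  have key : Set.EqOn (fun y : ℝ => Hm (-(y:ℂ))) (fun y : ℝ => -Hp (y:ℂ)) NonInt := by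
    intro y hy
    simp only
    rw [hHm _ (neg_nonint y hy), hHp _ (nonInt_complex y hy), tsum_sgn_odd]
    rw [show (π:ℂ) * -(y:ℂ) = -((π:ℂ)*(y:ℂ)) by ring, Complex.sin_neg]
    ring
  have hfg := Continuous.ext_on dense_nonInt hcont1 hcont2 key
  exact fun y => congrFun hfg y

lemma norm_avg (u v : ℂ) (c cu cv : ℝ) (hu : ‖u - 1‖ ≤ cu) (hv : ‖v - 1‖ ≤ cv)
    (hcu : cu ≤ c) (hcv : cv ≤ c) : ‖(u - v)/2‖ ≤ c := by
  have h1 : (u - v)/2 = ((u - 1) - (v - 1))/2 := by ring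
  rw [h1, norm_div]
  have h2 : ‖(u-1) - (v-1)‖ ≤ cu + cv := (norm_sub_le _ _).trans (add_le_add hu hv)
  have h3 : ‖(2:ℂ)‖ = 2 := by norm_num
  rw [h3]
  linarith

include hHp hHm hHp_entire hHm_entire in
theorem final :
    ∃ C : ℝ, ∀ t Δ : ℝ, 0 < t → 0 < Δ → ∀ x : ℝ, t < |x| →
      ‖(Hp ((Δ * (t + x) : ℝ) : ℂ) + Hp ((Δ * (t - x) : ℝ) : ℂ)) / 2‖
          ≤ C * min 1 ((Δ ^ (2 : ℕ) * (|x| - t) ^ (2 : ℕ))⁻¹) ∧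
        ‖(Hm ((Δ * (t + x) : ℝ) : ℂ) + Hm ((Δ * (t - x) : ℝ) : ℂ)) / 2‖
          ≤ C * min 1 ((Δ ^ (2 : ℕ) * (|x| - t) ^ (2 : ℕ))⁻¹) := by
  refine ⟨2, fun t Δ ht hΔ x hx => ?_⟩
  have hpb := Hp_bound_pos Hp hHp_entire hHp
  have hmb := Hm_bound_pos Hm hHm_entire hHm
  have hodd1 := odd_rel1 Hp Hm hHp_entire hHm_entire hHp hHm
  have hodd2 := odd_rel2 Hp Hm hHp_entire hHm_entire hHp hHm
  rcases lt_abs.mp hx with hxt | hxt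
  · -- t < x
    have hxabs : |x| = x := abs_of_pos (by linarith)
    have ha0 : 0 < Δ*(t+x) := mul_pos hΔ (by linarith)
    have hb0 : 0 < Δ*(x-t) := mul_pos hΔ (by linarith)
    have hba : Δ*(x-t) ≤ Δ*(t+x) := mul_le_mul_of_nonneg_left (by linarith) hΔ.le
    have hmin : min 1 (((Δ*(t+x))^2)⁻¹) ≤ min 1 (((Δ*(x-t))^2)⁻¹) :=
      min_le_min le_rfl (inv_anti₀ (by positivity) (by nlinarith))
    have hRHS : (Δ ^ (2:ℕ) * (|x| - t) ^ (2:ℕ))⁻¹ = (((Δ*(x-t))^2)⁻¹) := by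
      rw [hxabs, mul_pow]
    have hkey2 : ((Δ*(t-x) : ℝ) : ℂ) = -((Δ*(x-t) : ℝ) : ℂ) := by
      push_cast; ring
    rw [hRHS]
    constructor
    · have heq : Hp ((Δ*(t+x) : ℝ) : ℂ) + Hp ((Δ*(t-x) : ℝ) : ℂ)
          = Hp ((Δ*(t+x) : ℝ) : ℂ) - Hm ((Δ*(x-t) : ℝ) : ℂ) := by
        rw [hkey2, hodd1 (Δ*(x-t))]; ring
      rw [heq]
      exact norm_avg _ _ _ _ _ (hpb _ ha0) (hmb _ hb0)
        (by linarith [hmin] : 2 * min 1 (((Δ*(t+x))^2)⁻¹) ≤ 2 * min 1 (((Δ*(x-t))^2)⁻¹))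
        le_rfl
    · have heq : Hm ((Δ*(t+x) : ℝ) : ℂ) + Hm ((Δ*(t-x) : ℝ) : ℂ)
          = Hm ((Δ*(t+x) : ℝ) : ℂ) - Hp ((Δ*(x-t) : ℝ) : ℂ) := by
        rw [hkey2, hodd2 (Δ*(x-t))]; ring
      rw [heq]
      exact norm_avg _ _ _ _ _ (hmb _ ha0) (hpb _ hb0)
        (by linarith [hmin]) le_rfl
  · -- t < -x
    have hxabs : |x| = -x := abs_of_neg (by linarith)
    have ha0 : 0 < Δ*(-x-t) := mul_pos hΔ (by linarith)
    have hb0 : 0 < Δ*(t-x) := mul_pos hΔ (by linarith)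
    have hba : Δ*(-x-t) ≤ Δ*(t-x) := mul_le_mul_of_nonneg_left (by linarith) hΔ.le
    have hmin : min 1 (((Δ*(t-x))^2)⁻¹) ≤ min 1 (((Δ*(-x-t))^2)⁻¹) :=
      min_le_min le_rfl (inv_anti₀ (by positivity) (by nlinarith))
    have hRHS : (Δ ^ (2:ℕ) * (|x| - t) ^ (2:ℕ))⁻¹ = (((Δ*(-x-t))^2)⁻¹) := by
      rw [hxabs, mul_pow]
    have hkey2 : ((Δ*(t+x) : ℝ) : ℂ) = -((Δ*(-x-t) : ℝ) : ℂ) := by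
      push_cast; ring
    rw [hRHS]
    constructor
    · have heq : Hp ((Δ*(t+x) : ℝ) : ℂ) + Hp ((Δ*(t-x) : ℝ) : ℂ)
          = Hp ((Δ*(t-x) : ℝ) : ℂ) - Hm ((Δ*(-x-t) : ℝ) : ℂ) := by
        rw [hkey2, hodd1 (Δ*(-x-t))]; ring
      rw [heq]
      exact norm_avg _ _ _ _ _ (hpb _ hb0) (hmb _ ha0)
        (by linarith [hmin]) le_rfl
    · have heq : Hm ((Δ*(t+x) : ℝ) : ℂ) + Hm ((Δ*(t-x) : ℝ) : ℂ)
          = Hm ((Δ*(t-x) : ℝ) : ℂ) - Hp ((Δ*(-x-t) : ℝ) : ℂ) := by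
        rw [hkey2, hodd2 (Δ*(-x-t))]; ring
      rw [heq]
      exact norm_avg _ _ _ _ _ (hmb _ hb0) (hpb _ ha0)
        (by linarith [hmin]) le_rfl

end Main


/-- |R±(x)| ≤ C·min(1, Δ^{-2}(|x|-t)^{-2}) for real x with |x| > t, with an
absolute constant C. -/
theorem selberg_decay_on_reals
    (Hp Hm : ℂ → ℂ)
    (hHp_entire : Differentiable ℂ Hp) (hHm_entire : Differentiable ℂ Hm)
    (hHp : ∀ z : ℂ, (∀ m : ℤ, z ≠ (m : ℂ)) →
      Hp z = (Complex.sin (π * z) / π) ^ 2 *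
          ((∑' m : ℤ, (Int.sign m : ℂ) / (z - (m : ℂ)) ^ 2) + 2 / z)
        + (Complex.sin (π * z) / (π * z)) ^ 2)
    (hHm : ∀ z : ℂ, (∀ m : ℤ, z ≠ (m : ℂ)) →
      Hm z = (Complex.sin (π * z) / π) ^ 2 *
          ((∑' m : ℤ, (Int.sign m : ℂ) / (z - (m : ℂ)) ^ 2) + 2 / z)
        - (Complex.sin (π * z) / (π * z)) ^ 2) :
    ∃ C : ℝ, ∀ t Δ : ℝ, 0 < t → 0 < Δ → ∀ x : ℝ, t < |x| →
      ‖(Hp ((Δ * (t + x) : ℝ) : ℂ) + Hp ((Δ * (t - x) : ℝ) : ℂ)) / 2‖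
          ≤ C * min 1 ((Δ ^ (2 : ℕ) * (|x| - t) ^ (2 : ℕ))⁻¹) ∧
        ‖(Hm ((Δ * (t + x) : ℝ) : ℂ) + Hm ((Δ * (t - x) : ℝ) : ℂ)) / 2‖
          ≤ C * min 1 ((Δ ^ (2 : ℕ) * (|x| - t) ^ (2 : ℕ))⁻¹) :=
  final Hp Hm hHp_entire hHm_entire hHp hHm

end
end
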